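/- arXiv:2605.30164 — 7 statements merged into one kernel-verified Lean document; each statement's English description precedes it below -/
import Mathlib

section
/- With the matrix M(λ) and Δ(λ) = det M(λ) as defined (N ≥ 1, p₀ ≠ 0): if Δ(λ) = 0 for all λ ∈ ℂ, then N is even and, writing m = N/2, one has u₋₁ = m(m+1)·p₁/(2·p₀). -/
open Polynomial

noncomputable section

/-- The `(N+1)×(N+1)` matrix `M(λ)` (rows/columns re-indexed from `0` to `N`; in the paper's
`1,…,N+1` indexing, `M_{r,c} = a_{r−c−1}(λ)` for `c ≤ r`, `M_{r,c} = r·(N−r+1)` for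
`c = r+1`, and `0` otherwise, where `a₋₁(λ) = u₋₁` and `a_j(λ) = u_j + λ·p_j` for `j ≥ 0`).
Its entries are polynomials in `λ` (the variable `X`). -/
def Mmat (N : ℕ) (um1 : ℂ) (u p : ℕ → ℂ) : Matrix (Fin (N + 1)) (Fin (N + 1)) ℂ[X] :=
  Matrix.of fun r c : Fin (N + 1) =>
    if (c : ℕ) = (r : ℕ) then C um1
    else if (c : ℕ) < (r : ℕ) then
      C (u ((r : ℕ) - (c : ℕ) - 1)) + X * C (p ((r : ℕ) - (c : ℕ) - 1))
    else if (c : ℕ) = (r : ℕ) + 1 then C (((((r : ℕ) + 1) * (N - (r : ℕ)) : ℕ) : ℂ))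
    else 0

/-- `Δ = det M(λ)`, a polynomial in `λ`. -/
def DeltaPoly (N : ℕ) (um1 : ℂ) (u p : ℕ → ℂ) : ℂ[X] :=
  (Mmat N um1 u p).det

open Finset

namespace RA

def bb (N r : ℕ) : ℂ := (((r+1) * (N - r) : ℕ) : ℂ)

variable (N : ℕ) (um1 : ℂ) (u p : ℕ → ℂ)

def vs : ℕ → ℂ[X]
  | 0 => 1
  | (r+1) => -C (bb N r)⁻¹ * (C um1 * vs r +
      ∑ c ∈ (Finset.range r).attach, (C (u (r - 1 - c.1)) + X * C (p (r - 1 - c.1))) * vs c.1)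
  decreasing_by
  · exact Nat.lt_succ_self r
  · exact Nat.lt_succ_of_lt (Finset.mem_range.mp c.2)

def W (r : ℕ) : ℂ[X] :=
  C um1 * vs N um1 u p r +
    ∑ c ∈ Finset.range r, (C (u (r - 1 - c)) + X * C (p (r - 1 - c))) * vs N um1 u p c

lemma vs_succ (r : ℕ) : vs N um1 u p (r+1) = -C (bb N r)⁻¹ * W N um1 u p r := by
  rw [vs, W, Finset.sum_attach (Finset.range r)
    (fun c => (C (u (r - 1 - c)) + X * C (p (r - 1 - c))) * vs N um1 u p c)]

lemma coeff_term (a b : ℂ) (f : ℂ[X]) (k : ℕ) :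
    ((C a + X * C b) * f).coeff (k+1) = a * f.coeff (k+1) + b * f.coeff k := by
  rw [add_mul, coeff_add, coeff_C_mul, mul_assoc, coeff_X_mul, coeff_C_mul]

lemma vs_coeff_zero : ∀ r, ∀ j, r/2 < j → (vs N um1 u p r).coeff j = 0 := by
  intro r
  induction r using Nat.strong_induction_on with
  | _ r ih =>
    rcases r with _ | s
    · intro j hj
      simp only [vs, coeff_one]
      exact if_neg (by omega)
    · 
      intro j hj
      obtain ⟨k, rfl⟩ : ∃ k, j = k+1 := ⟨j-1, by omega⟩
      rw [vs_succ, W, neg_mul, coeff_neg, coeff_C_mul, coeff_add, coeff_C_mul, finset_sum_coeff]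
      have h1 : (vs N um1 u p s).coeff (k+1) = 0 := ih s (by omega) _ (by omega)
      have h2 : ∀ c ∈ range s,
          ((C (u (s-1-c)) + X * C (p (s-1-c))) * vs N um1 u p c).coeff (k+1) = 0 := by
        intro c hc
        have hc' := Finset.mem_range.mp hc
        rw [coeff_term, ih c (by omega) (k+1) (by omega), ih c (by omega) k (by omega),
          mul_zero, mul_zero, add_zero]
      rw [Finset.sum_eq_zero h2, h1]
      ring

end RA

namespace RA
variable (N : ℕ) (um1 : ℂ) (u p : ℕ → ℂ)

def tc (r : ℕ) : ℂ := (vs N um1 u p r).coeff (r/2)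

lemma tc_zero : tc N um1 u p 0 = 1 := by
  simp [tc, vs]

lemma tc_one : tc N um1 u p 1 = -(bb N 0)⁻¹ * um1 := by
  have : vs N um1 u p 1 = -C (bb N 0)⁻¹ * W N um1 u p 0 := vs_succ N um1 u p 0
  simp [tc, this, W, vs]

lemma W_coeff_odd (s : ℕ) :
    (W N um1 u p (2*s+1)).coeff (s+1) = p 0 * tc N um1 u p (2*s) := by
  rw [W, coeff_add, coeff_C_mul,
    vs_coeff_zero N um1 u p (2*s+1) (s+1) (by omega), mul_zero, zero_add, finset_sum_coeff,
    Finset.sum_range_succ]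
  have hz : ∀ c ∈ range (2*s),
      ((C (u (2*s+1-1-c)) + X * C (p (2*s+1-1-c))) * vs N um1 u p c).coeff (s+1) = 0 := by
    intro c hc
    have hc' := Finset.mem_range.mp hc
    rw [coeff_term, vs_coeff_zero N um1 u p c (s+1) (by omega),
      vs_coeff_zero N um1 u p c s (by omega), mul_zero, mul_zero, add_zero]
  rw [Finset.sum_eq_zero hz, zero_add, show 2*s+1-1-(2*s) = 0 by omega, coeff_term,
    vs_coeff_zero N um1 u p (2*s) (s+1) (by omega), mul_zero, zero_add, tc,
    show (2*s)/2 = s by omega]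

lemma W_coeff_even (s : ℕ) :
    (W N um1 u p (2*s+2)).coeff (s+1) =
      um1 * tc N um1 u p (2*s+2) + p 0 * tc N um1 u p (2*s+1) + p 1 * tc N um1 u p (2*s) := by
  rw [W, coeff_add, coeff_C_mul, finset_sum_coeff, Finset.sum_range_succ, Finset.sum_range_succ]
  have hz : ∀ c ∈ range (2*s),
      ((C (u (2*s+2-1-c)) + X * C (p (2*s+2-1-c))) * vs N um1 u p c).coeff (s+1) = 0 := by
    intro c hc
    have hc' := Finset.mem_range.mp hc
    rw [coeff_term, vs_coeff_zero N um1 u p c (s+1) (by omega),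
      vs_coeff_zero N um1 u p c s (by omega), mul_zero, mul_zero, add_zero]
  rw [Finset.sum_eq_zero hz, zero_add, show 2*s+2-1-(2*s) = 1 by omega,
    show 2*s+2-1-(2*s+1) = 0 by omega, coeff_term, coeff_term,
    vs_coeff_zero N um1 u p (2*s) (s+1) (by omega), mul_zero, zero_add,
    vs_coeff_zero N um1 u p (2*s+1) (s+1) (by omega), mul_zero, zero_add]
  have e1 : tc N um1 u p (2*s+2) = (vs N um1 u p (2*s+2)).coeff (s+1) := by
    rw [tc, show (2*s+2)/2 = s+1 by omega]
  have e2 : tc N um1 u p (2*s+1) = (vs N um1 u p (2*s+1)).coeff s := by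
    rw [tc, show (2*s+1)/2 = s by omega]
  have e3 : tc N um1 u p (2*s) = (vs N um1 u p (2*s)).coeff s := by
    rw [tc, show (2*s)/2 = s by omega]
  rw [e1, e2, e3]; ring

lemma tc_rec_even (s : ℕ) :
    tc N um1 u p (2*s+2) = -(bb N (2*s+1))⁻¹ * (p 0 * tc N um1 u p (2*s)) := by
  have : tc N um1 u p (2*s+2) = (vs N um1 u p (2*s+2)).coeff (s+1) := by
    rw [tc, show (2*s+2)/2 = s+1 by omega]
  rw [this, show 2*s+2 = (2*s+1)+1 by omega, vs_succ, neg_mul, coeff_neg, coeff_C_mul,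
    W_coeff_odd, neg_mul]

lemma tc_rec_odd (s : ℕ) :
    tc N um1 u p (2*s+3) = -(bb N (2*s+2))⁻¹ *
      (um1 * tc N um1 u p (2*s+2) + p 0 * tc N um1 u p (2*s+1) + p 1 * tc N um1 u p (2*s)) := by
  have : tc N um1 u p (2*s+3) = (vs N um1 u p (2*s+3)).coeff (s+1) := by
    rw [tc, show (2*s+3)/2 = s+1 by omega]
  rw [this, show 2*s+3 = (2*s+2)+1 by omega, vs_succ, neg_mul, coeff_neg, coeff_C_mul,
    W_coeff_even, neg_mul]

end RA

namespace RA
variable (N : ℕ) (um1 : ℂ) (u p : ℕ → ℂ)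

lemma bb_ne_zero {r : ℕ} (hr : r < N) : bb N r ≠ 0 := by
  rw [bb, Nat.cast_ne_zero]
  have : 0 < N - r := by omega
  positivity

def ge (i c : ℕ) : ℂ[X] :=
  (if c = i then C um1
   else if c < i then C (u (i - c - 1)) + X * C (p (i - c - 1))
   else if c = i + 1 then C (bb N i) else 0) * vs N um1 u p c

lemma ge_diag (i : ℕ) : ge N um1 u p i i = C um1 * vs N um1 u p i := by
  unfold ge; rw [if_pos rfl]

lemma ge_low {i c : ℕ} (h : c < i) :
    ge N um1 u p i c = (C (u (i - 1 - c)) + X * C (p (i - 1 - c))) * vs N um1 u p c := by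
  unfold ge
  rw [if_neg (by omega), if_pos h, show i - c - 1 = i - 1 - c by omega]

lemma ge_super (i : ℕ) : ge N um1 u p i (i+1) = C (bb N i) * vs N um1 u p (i+1) := by
  unfold ge
  rw [if_neg (by omega), if_neg (by omega), if_pos rfl]

lemma ge_high {i c : ℕ} (h : i + 2 ≤ c) : ge N um1 u p i c = 0 := by
  unfold ge
  rw [if_neg (by omega), if_neg (by omega), if_neg (by omega), zero_mul]

lemma row_sum (i : Fin (N+1)) :
    ∑ c : Fin (N+1), Mmat N um1 u p i c * vs N um1 u p c.1 =
      if i.1 = N then W N um1 u p N else 0 := by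
  have hgf : ∀ c : Fin (N+1), Mmat N um1 u p i c * vs N um1 u p c.1 = ge N um1 u p i.1 c.1 := by
    intro c; rfl
  rw [Finset.sum_congr rfl (fun c _ => hgf c),
    Fin.sum_univ_eq_sum_range (ge N um1 u p i.1) (N+1)]
  by_cases hiN : i.1 = N
  · rw [if_pos hiN, hiN, Finset.sum_range_succ,
      Finset.sum_congr rfl (fun c hc => ge_low N um1 u p (Finset.mem_range.mp hc)),
      ge_diag, W]
    ring
  · rw [if_neg hiN]
    have hi : i.1 < N := by omega
    have hsub : Finset.range (i.1+2) ⊆ Finset.range (N+1) := Finset.range_subset_range.mpr (by omega)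
    rw [← Finset.sum_subset hsub (fun c _ hc2 =>
      ge_high N um1 u p (by
        by_contra hcon
        exact hc2 (Finset.mem_range.mpr (by omega)))),
      Finset.sum_range_succ, Finset.sum_range_succ,
      Finset.sum_congr rfl (fun c hc => ge_low N um1 u p (Finset.mem_range.mp hc)),
      ge_diag, ge_super, vs_succ]
    have hC : C (bb N i.1) * -C (bb N i.1)⁻¹ = -1 := by
      rw [mul_neg, ← C_mul, mul_inv_cancel₀ (bb_ne_zero N hi), C_1]
    calc ∑ c ∈ Finset.range i.1, (C (u (i.1 - 1 - c)) + X * C (p (i.1 - 1 - c))) * vs N um1 u p c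
          + C um1 * vs N um1 u p i.1
          + C (bb N i.1) * (-C (bb N i.1)⁻¹ * W N um1 u p i.1)
        = W N um1 u p i.1 + (C (bb N i.1) * -C (bb N i.1)⁻¹) * W N um1 u p i.1 := by
          rw [W]; ring
      _ = 0 := by rw [hC]; ring

end RA

namespace RA
variable (N : ℕ) (um1 : ℂ) (u p : ℕ → ℂ)

lemma det_eq :
    DeltaPoly N um1 u p =
      W N um1 u p N * ((-1)^N * ∏ r : Fin N, C (bb N r.1)) := by
  set A := Mmat N um1 u p with hA
  set b : Fin (N+1) → ℂ[X] := fun i => vs N um1 u p i.1 with hb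
  set E := (1 : Matrix (Fin (N+1)) (Fin (N+1)) ℂ[X]).updateCol 0 b with hEdef
  have hE : E.det = 1 := by
    have h1 : E.det = Matrix.cramer (1 : Matrix (Fin (N+1)) (Fin (N+1)) ℂ[X]) b 0 :=
      (Matrix.cramer_apply (1 : Matrix (Fin (N+1)) (Fin (N+1)) ℂ[X]) b 0).symm
    rw [h1, Matrix.cramer_one]
    show b 0 = 1
    simp [hb, vs]
  have hME : A * E = A.updateCol 0 (fun i => if i.1 = N then W N um1 u p N else 0) := by
    apply Matrix.ext
    intro i j
    rw [Matrix.mul_apply, Matrix.updateCol_apply]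
    by_cases hj : j = 0
    · rw [if_pos hj]; subst hj
      have hEk : ∀ k : Fin (N+1), E k 0 = b k := fun k => Matrix.updateCol_self
      calc ∑ k, A i k * E k 0 = ∑ k, A i k * vs N um1 u p k.1 :=
            Finset.sum_congr rfl (fun k _ => by rw [hEk k])
        _ = _ := row_sum N um1 u p i
    · rw [if_neg hj]
      have hEk : ∀ k : Fin (N+1), E k j = (1 : Matrix (Fin (N+1)) (Fin (N+1)) ℂ[X]) k j :=
        fun k => Matrix.updateCol_ne hj
      rw [Finset.sum_congr rfl (fun k _ => by rw [hEk k])]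
      simp [Matrix.one_apply, mul_ite]
  have key : (fun i : Fin (N+1) => if i.1 = N then W N um1 u p N else 0)
      = W N um1 u p N • (Pi.single (Fin.last N) (1 : ℂ[X]) : Fin (N+1) → ℂ[X]) := by
    funext i
    rw [Pi.smul_apply, Pi.single_apply, smul_eq_mul]
    by_cases hi : i = Fin.last N
    · rw [if_pos (by rw [hi]; rfl), if_pos hi, mul_one]
    · rw [if_neg (fun hh => hi (Fin.ext (by simpa using hh))), if_neg hi, mul_zero]
  have hlow : (A.updateCol 0 (Pi.single (Fin.last N) (1:ℂ[X]))).det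
      = (-1)^N * ∏ r : Fin N, C (bb N r.1) := by
    set B := A.updateCol 0 (Pi.single (Fin.last N) (1:ℂ[X])) with hB
    rw [Matrix.det_succ_column_zero]
    rw [Finset.sum_eq_single (Fin.last N)]
    · have hB0 : B (Fin.last N) 0 = 1 := by
        rw [hB, Matrix.updateCol_self, Pi.single_eq_same]
      rw [hB0, mul_one, Fin.val_last]
      congr 1
      have hsub : ∀ (i j : Fin N),
          (B.submatrix (Fin.last N).succAbove Fin.succ) i j = A i.castSucc j.succ := by
        intro i j
        rw [Matrix.submatrix_apply, Fin.succAbove_last_apply, hB,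
          Matrix.updateCol_ne (Fin.succ_ne_zero j)]
      have htri : (B.submatrix (Fin.last N).succAbove Fin.succ).BlockTriangular OrderDual.toDual := by
        intro i j hij
        have hij' : i < j := hij
        rw [hsub i j]
        show Mmat N um1 u p i.castSucc j.succ = 0
        have h1 : (j.succ : ℕ) = j.1 + 1 := rfl
        have h2 : (i.castSucc : ℕ) = i.1 := rfl
        have hlt : i.1 < j.1 := hij'
        rw [Mmat]
        show (if (j.1+1) = i.1 then _ else if (j.1+1) < i.1 then _
          else if (j.1+1) = i.1 + 1 then _ else 0) = 0
        rw [if_neg (by omega), if_neg (by omega), if_neg (by omega)]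
      rw [Matrix.det_of_lowerTriangular _ htri]
      apply Finset.prod_congr rfl
      intro i _
      rw [hsub i i]
      show Mmat N um1 u p i.castSucc i.succ = C (bb N i.1)
      rw [Mmat]
      show (if (i.1+1) = i.1 then _ else if (i.1+1) < i.1 then _
        else if (i.1+1) = i.1 + 1 then C ((((i.1+1) * (N - i.1) : ℕ)):ℂ) else 0) = C (bb N i.1)
      rw [if_neg (by omega), if_neg (by omega), if_pos rfl]
      rfl
    · intro i _ hine
      have : B i 0 = 0 := by
        rw [hB, Matrix.updateCol_self, Pi.single_eq_of_ne hine]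
      rw [this, mul_zero, zero_mul]
    · intro hmem
      exact absurd (Finset.mem_univ _) hmem
  calc DeltaPoly N um1 u p = A.det * E.det := by rw [hE, mul_one]; rfl
    _ = (A * E).det := (Matrix.det_mul A E).symm
    _ = (A.updateCol 0 (fun i => if i.1 = N then W N um1 u p N else 0)).det := by rw [hME]
    _ = W N um1 u p N * (A.updateCol 0 (Pi.single (Fin.last N) (1:ℂ[X]))).det := by
        rw [key, Matrix.det_updateCol_smul]
    _ = _ := by rw [hlow]

end RA
namespace RA

def cbc (n : ℕ) : ℂ := (Nat.centralBinom n : ℂ)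
def cat (n : ℕ) : ℂ := (catalan n : ℂ)

lemma cbc_ne_zero (n : ℕ) : cbc n ≠ 0 := by
  rw [cbc, Nat.cast_ne_zero]
  exact n.centralBinom_ne_zero

lemma cbc_zero : cbc 0 = 1 := by simp [cbc, Nat.centralBinom_zero]

lemma succ_cbc (n : ℕ) : ((n:ℂ)+1) * cbc (n+1) = 2*(2*(n:ℂ)+1) * cbc n := by
  have h := Nat.succ_mul_centralBinom_succ n
  have h2 : ((n:ℂ)+1) * (Nat.centralBinom (n+1) : ℂ)
      = 2*(2*(n:ℂ)+1) * (Nat.centralBinom n : ℂ) := by exact_mod_cast h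
  rw [cbc, cbc]; exact h2

lemma cat_cbc (n : ℕ) : ((n:ℂ)+1) * cat n = cbc n := by
  have h := succ_mul_catalan_eq_centralBinom n
  have h2 : ((n:ℂ)+1) * (catalan n : ℂ) = (Nat.centralBinom n : ℂ) := by exact_mod_cast h
  rw [cbc, cat]; exact h2

lemma cbc_succ_eq (n : ℕ) : cbc (n+1) = 4 * cbc n - 2 * cat n := by
  have hne : ((n:ℂ)+1) ≠ 0 := by
    exact_mod_cast (by omega : (n+1 : ℕ) ≠ 0)
  apply mul_left_cancel₀ hne
  rw [succ_cbc]
  linear_combination 2 * cat_cbc n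

lemma cat_conv (n : ℕ) : cat (n+1) = ∑ j ∈ range (n+1), cat j * cat (n - j) := by
  have h := catalan_succ n
  have : cat (n+1) = ∑ i : Fin (n+1), cat i.1 * cat (n - i.1) := by
    rw [cat, h]
    push_cast
    rfl
  rw [this, Fin.sum_univ_eq_sum_range (fun j => cat j * cat (n - j)) (n+1)]

lemma lemB (n : ℕ) : 2 * ∑ j ∈ range (n+1), cbc j * cat (n - j) = cbc (n+1) := by
  have refl1 : ∑ j ∈ range (n+1), (((j:ℂ))+1) * (cat j * cat (n-j))
      = ∑ j ∈ range (n+1), ((((n-j : ℕ):ℂ))+1) * (cat (n-j) * cat (n-(n-j))) := by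
    exact (Finset.sum_range_reflect (fun j => (((j:ℂ))+1) * (cat j * cat (n-j))) (n+1)).symm
  have refl2 : ∑ j ∈ range (n+1), ((((n-j : ℕ):ℂ))+1) * (cat (n-j) * cat (n-(n-j)))
      = ∑ j ∈ range (n+1), ((((n-j : ℕ):ℂ))+1) * (cat (n-j) * cat j) := by
    apply Finset.sum_congr rfl
    intro j hj
    have hj' := Finset.mem_range.mp hj
    rw [show n - (n-j) = j by omega]
  have hterm : ∀ j ∈ range (n+1), cbc j * cat (n-j) = (((j:ℂ))+1) * (cat j * cat (n-j)) := by
    intro j _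
    rw [← cat_cbc j]; ring
  rw [Finset.sum_congr rfl hterm]
  have key : 2 * ∑ j ∈ range (n+1), (((j:ℂ))+1) * (cat j * cat (n-j))
      = ∑ j ∈ range (n+1), ((n:ℂ)+2) * (cat j * cat (n-j)) := by
    rw [two_mul]
    nth_rewrite 2 [refl1]
    rw [refl2, ← Finset.sum_add_distrib]
    apply Finset.sum_congr rfl
    intro j hj
    have hj' := Finset.mem_range.mp hj
    have hc : (((n-j : ℕ):ℂ)) = (n:ℂ) - (j:ℂ) := by
      push_cast [Nat.cast_sub (by omega : j ≤ n)]; ring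
    rw [hc]; ring
  rw [key, ← Finset.mul_sum, ← cat_conv, ← cat_cbc (n+1)]
  push_cast; ring

lemma lemS : ∀ n, ∑ j ∈ range (n+1), cbc j * cbc (n-j) = 4^n := by
  intro n
  induction n with
  | zero => simp [cbc_zero]
  | succ n ih =>
    rw [Finset.sum_range_succ, show n+1-(n+1) = 0 by omega, cbc_zero, mul_one]
    have hterm : ∀ j ∈ range (n+1), cbc j * cbc (n+1-j)
        = 4 * (cbc j * cbc (n-j)) - 2 * (cbc j * cat (n-j)) := by
      intro j hj
      have hj' := Finset.mem_range.mp hj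
      rw [show n+1-j = (n-j)+1 by omega, cbc_succ_eq]; ring
    rw [Finset.sum_congr rfl hterm, Finset.sum_sub_distrib, ← Finset.mul_sum, ← Finset.mul_sum,
      ih]
    linear_combination - lemB n

lemma term_shift (n i : ℕ) (hi : i ≤ n) :
    ((i+1 : ℕ):ℂ) * (((n+2:ℕ):ℂ) - ((i+1:ℕ):ℂ)) * cbc (i+1) * cbc (n+2-(i+1))
    = 16 * ((i:ℂ) * ((n:ℂ) - (i:ℂ)) * cbc i * cbc (n-i))
      + (4*(2*(n:ℂ)+1)) * (cbc i * cbc (n-i)) := by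
  have h1 := succ_cbc i
  have h2 := succ_cbc (n-i)
  have hc : ((n-i : ℕ):ℂ) = (n:ℂ) - (i:ℂ) := by
    push_cast [Nat.cast_sub hi]; ring
  rw [hc] at h2
  rw [show n+2-(i+1) = (n-i)+1 by omega]
  push_cast
  linear_combination (((n:ℂ)-(i:ℂ))+1) * cbc ((n-i)+1) * h1 + (2*(2*(i:ℂ)+1)*cbc i) * h2

lemma Hs_rec (n : ℕ) :
    (∑ j ∈ range (n+2+1), (j:ℂ) * (((n+2:ℕ):ℂ) - (j:ℂ)) * cbc j * cbc (n+2-j))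
    = 16 * (∑ j ∈ range (n+1), (j:ℂ) * ((n:ℂ) - (j:ℂ)) * cbc j * cbc (n-j))
      + 4*(2*(n:ℂ)+1) * 4^n := by
  rw [Finset.sum_range_succ']
  rw [show ((0:ℕ):ℂ) * (((n+2:ℕ):ℂ) - ((0:ℕ):ℂ)) * cbc 0 * cbc (n+2-0) = 0 by
    push_cast; ring]
  rw [add_zero, Finset.sum_range_succ]
  rw [show ((n+1+1:ℕ):ℂ) * (((n+2:ℕ):ℂ) - ((n+1+1:ℕ):ℂ)) * cbc (n+1+1) * cbc (n+2-(n+1+1)) = 0 by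
    push_cast; ring]
  rw [add_zero]
  have hterm : ∀ i ∈ range (n+1),
      ((i+1 : ℕ):ℂ) * (((n+2:ℕ):ℂ) - ((i+1:ℕ):ℂ)) * cbc (i+1) * cbc (n+2-(i+1))
      = 16 * ((i:ℂ) * ((n:ℂ) - (i:ℂ)) * cbc i * cbc (n-i))
        + (4*(2*(n:ℂ)+1)) * (cbc i * cbc (n-i)) := by
    intro i hi
    exact term_shift n i (by have := Finset.mem_range.mp hi; omega)
  rw [Finset.sum_congr rfl hterm, Finset.sum_add_distrib, ← Finset.mul_sum, ← Finset.mul_sum,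
    lemS n]

lemma Hs_closed : ∀ n : ℕ, 8 * (∑ j ∈ range (n+1), (j:ℂ) * ((n:ℂ) - (j:ℂ)) * cbc j * cbc (n-j))
    = (n:ℂ) * ((n:ℂ) - 1) * 4^n := by
  intro n
  induction n using Nat.strong_induction_on with
  | _ n ih =>
    match n with
    | 0 => norm_num
    | 1 =>
      rw [Finset.sum_range_succ, Finset.sum_range_succ, Finset.sum_range_zero]
      norm_num
    | (k+2) =>
      rw [Hs_rec k]
      push_cast
      linear_combination 16 * ih k (by omega)

lemma lemI2 (m : ℕ) :
    ∑ j ∈ range (m+1), (2*(j:ℂ)) * (2*((m:ℂ) - (j:ℂ)) + 1) * (cbc j * cbc (m-j))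
    = (m:ℂ)*((m:ℂ)+1) * 4^m / 2 := by
  have hterm : ∀ j ∈ range (m+1),
      (2*(j:ℂ)) * (2*((m:ℂ) - (j:ℂ)) + 1) * (cbc j * cbc (m-j))
      = (j:ℂ) * (((m+1:ℕ):ℂ) - (j:ℂ)) * cbc j * cbc (m+1-j) := by
    intro j hj
    have hj' := Finset.mem_range.mp hj
    have h2 := succ_cbc (m-j)
    have hc : ((m-j : ℕ):ℂ) = (m:ℂ) - (j:ℂ) := by
      push_cast [Nat.cast_sub (by omega : j ≤ m)]; ring
    rw [hc] at h2
    rw [show m+1-j = (m-j)+1 by omega]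
    push_cast
    linear_combination (-(j:ℂ) * cbc j) * h2
  rw [Finset.sum_congr rfl hterm]
  have hext : ∑ j ∈ range (m+1+1), (j:ℂ) * (((m+1:ℕ):ℂ) - (j:ℂ)) * cbc j * cbc (m+1-j)
      = ∑ j ∈ range (m+1), (j:ℂ) * (((m+1:ℕ):ℂ) - (j:ℂ)) * cbc j * cbc (m+1-j) := by
    rw [Finset.sum_range_succ]
    rw [show ((m+1:ℕ):ℂ) * (((m+1:ℕ):ℂ) - ((m+1:ℕ):ℂ)) * cbc (m+1) * cbc (m+1-(m+1)) = 0 by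
      push_cast; ring]
    rw [add_zero]
  rw [← hext]
  have hH := Hs_closed (m+1)
  field_simp
  push_cast at hH ⊢
  linear_combination hH / 4

end RA

namespace RA
variable (N : ℕ) (um1 : ℂ) (u p : ℕ → ℂ)

lemma bb_cast {N r : ℕ} (h : r ≤ N) : bb N r = ((r:ℂ)+1) * ((N:ℂ) - (r:ℂ)) := by
  rw [bb]
  push_cast [Nat.cast_sub h]
  ring

lemma tc_even_ne (hp0 : p 0 ≠ 0) : ∀ k : ℕ, 2*k ≤ N → tc N um1 u p (2*k) ≠ 0 := by
  intro k
  induction k with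
  | zero => intro _; rw [show 2*0 = 0 by ring, tc_zero]; exact one_ne_zero
  | succ k ih =>
    intro hk
    rw [show 2*(k+1) = 2*k+2 by ring, tc_rec_even]
    apply mul_ne_zero
    · rw [neg_ne_zero]
      exact inv_ne_zero (bb_ne_zero N (by omega))
    · exact mul_ne_zero hp0 (ih (by omega))

lemma keyid (m k' : ℕ) (h : k'+1 ≤ m) :
    cbc (k'+1) * cbc (m-(k'+1)) * bb (2*m) (2*k'+1)
      = cbc k' * cbc (m-k') * bb (2*m) (2*k') := by
  have h1 := succ_cbc k'
  have h2 := succ_cbc (m-(k'+1))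
  have e2 : (m-(k'+1))+1 = m-k' := by omega
  rw [e2] at h2
  have hc : ((m-(k'+1) : ℕ):ℂ) = (m:ℂ) - (k':ℂ) - 1 := by
    rw [Nat.cast_sub (by omega : k'+1 ≤ m)]
    push_cast
    ring
  rw [hc] at h2
  rw [bb_cast (by omega : 2*k'+1 ≤ 2*m), bb_cast (by omega : 2*k' ≤ 2*m)]
  have hne1 : ((k':ℂ)+1) ≠ 0 := by exact_mod_cast (by omega : (k'+1:ℕ) ≠ 0)
  have hne2 : ((m:ℂ)-(k':ℂ)) ≠ 0 := by
    have : ((m-k' : ℕ):ℂ) ≠ 0 := by exact_mod_cast (by omega : (m-k':ℕ) ≠ 0)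
    rwa [Nat.cast_sub (by omega : k' ≤ m)] at this
  apply mul_left_cancel₀ (mul_ne_zero hne1 hne2)
  push_cast
  linear_combination (((m:ℂ)-(k':ℂ)) * cbc (m-(k'+1)) * ((2*(k':ℂ)+2)*(2*(m:ℂ)-2*(k':ℂ)-1))) * h1
    - (((k':ℂ)+1) * cbc k' * ((2*(k':ℂ)+1)*(2*(m:ℂ)-2*(k':ℂ)))) * h2

def bet (m j : ℕ) : ℂ := ((2*j*(2*m+1-2*j) : ℕ) : ℂ)

lemma bet_zero (m : ℕ) : bet m 0 = 0 := by simp [bet]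

lemma bet_cast (m j : ℕ) (h : j ≤ m) :
    bet m j = (2*(j:ℂ)) * (2*((m:ℂ)-(j:ℂ))+1) := by
  rw [bet]
  push_cast [Nat.cast_sub (show 2*j ≤ 2*m+1 by omega)]
  ring

lemma bet_succ_eq (m k' : ℕ) (h : k'+1 ≤ m) : bet m (k'+1) = bb (2*m) (2*k'+1) := by
  rw [bet_cast m (k'+1) h, bb_cast (by omega : 2*k'+1 ≤ 2*m)]
  push_cast
  ring

def sig (m : ℕ) (um1 : ℂ) (p : ℕ → ℂ) (k : ℕ) : ℂ :=
  ∑ j ∈ Finset.range (k+1), (-um1 * p 0 + p 1 * bet m j) * (cbc j * cbc (m-j))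

lemma sig_succ (m k : ℕ) (um1 : ℂ) (p : ℕ → ℂ) :
    sig m um1 p (k+1) = sig m um1 p k
      + (-um1 * p 0 + p 1 * bet m (k+1)) * (cbc (k+1) * cbc (m-(k+1))) := by
  rw [sig, sig, Finset.sum_range_succ]

lemma Obase (m : ℕ) (hm : 1 ≤ m) :
    p 0 * (cbc 0 * cbc (m-0) * bb (2*m) 0 * tc (2*m) um1 u p 1)
      = tc (2*m) um1 u p 0 * sig m um1 p 0 := by
  rw [tc_one, tc_zero, sig, Finset.sum_range_one, bet_zero, cbc_zero]
  have hbb : bb (2*m) 0 ≠ 0 := bb_ne_zero (2*m) (by omega)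
  field_simp
  ring

lemma Ostep (m k' : ℕ) (h : k'+1 ≤ m) (hp0 : p 0 ≠ 0)
    (hprev : p 0 * (cbc k' * cbc (m-k') * bb (2*m) (2*k') * tc (2*m) um1 u p (2*k'+1))
      = tc (2*m) um1 u p (2*k') * sig m um1 p k') :
    -(p 0) * (cbc (k'+1) * cbc (m-(k'+1))) *
        (um1 * tc (2*m) um1 u p (2*k'+2) + p 0 * tc (2*m) um1 u p (2*k'+1)
          + p 1 * tc (2*m) um1 u p (2*k'))
      = tc (2*m) um1 u p (2*k'+2) * sig m um1 p (k'+1) := by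
  have hB1ne : bb (2*m) (2*k'+1) ≠ 0 := bb_ne_zero (2*m) (by omega)
  have hT0 : p 0 * tc (2*m) um1 u p (2*k') = -(bb (2*m) (2*k'+1)) * tc (2*m) um1 u p (2*k'+2) := by
    rw [tc_rec_even]
    field_simp
  have hkey := keyid m k' h
  have hEne : cbc k' * cbc (m-k') * bb (2*m) (2*k') ≠ 0 :=
    mul_ne_zero (mul_ne_zero (cbc_ne_zero k') (cbc_ne_zero (m-k'))) (bb_ne_zero (2*m) (by omega))
  apply mul_left_cancel₀ hEne
  rw [sig_succ, bet_succ_eq m k' h]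
  linear_combination
    (-(p 0) * (cbc (k'+1) * cbc (m-(k'+1)))) * hprev
    + (-((cbc (k'+1) * cbc (m-(k'+1))) * sig m um1 p k'
        + p 1 * (cbc (k'+1) * cbc (m-(k'+1))) * (cbc k' * cbc (m-k') * bb (2*m) (2*k')))) * hT0
    + (tc (2*m) um1 u p (2*k'+2) * sig m um1 p k') * hkey

lemma Omain (m : ℕ) (hm : 1 ≤ m) (hp0 : p 0 ≠ 0) :
    ∀ k : ℕ, k ≤ m-1 →
      p 0 * (cbc k * cbc (m-k) * bb (2*m) (2*k) * tc (2*m) um1 u p (2*k+1))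
        = tc (2*m) um1 u p (2*k) * sig m um1 p k := by
  intro k
  induction k with
  | zero =>
    intro _
    rw [show 2*0 = 0 by ring, show (0:ℕ)+1 = 1 from rfl]
    exact Obase um1 u p m hm
  | succ k ih =>
    intro hk
    have hprev := ih (by omega)
    have hstep := Ostep um1 u p m k (by omega) hp0 hprev
    have hbbne : bb (2*m) (2*k+2) ≠ 0 := bb_ne_zero (2*m) (by omega)
    have hodd := tc_rec_odd (2*m) um1 u p k
    have h2 : bb (2*m) (2*k+2) * tc (2*m) um1 u p (2*k+3)
        = -(um1 * tc (2*m) um1 u p (2*k+2) + p 0 * tc (2*m) um1 u p (2*k+1)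
            + p 1 * tc (2*m) um1 u p (2*k)) := by
      rw [hodd]
      field_simp
    rw [show 2*(k+1) = 2*k+2 by ring, show 2*k+2+1 = 2*k+3 by ring]
    linear_combination (p 0 * (cbc (k+1) * cbc (m-(k+1)))) * h2 + hstep

end RA

namespace RA
variable (N : ℕ) (um1 : ℂ) (u p : ℕ → ℂ)

lemma sig_eval (m : ℕ) :
    sig m um1 p m = -um1 * p 0 * 4^m + p 1 * ((m:ℂ)*((m:ℂ)+1) * 4^m / 2) := by
  rw [sig]
  have hsplit : ∀ j ∈ Finset.range (m+1),
      (-um1 * p 0 + p 1 * bet m j) * (cbc j * cbc (m-j))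
      = -um1 * p 0 * (cbc j * cbc (m-j)) + p 1 * (bet m j * (cbc j * cbc (m-j))) := by
    intro j _; ring
  rw [Finset.sum_congr rfl hsplit, Finset.sum_add_distrib, ← Finset.mul_sum, ← Finset.mul_sum]
  have h2 : ∑ j ∈ Finset.range (m+1), bet m j * (cbc j * cbc (m-j))
      = (m:ℂ)*((m:ℂ)+1) * 4^m / 2 := by
    rw [Finset.sum_congr rfl (fun j hj => by
      rw [bet_cast m j (by have := Finset.mem_range.mp hj; omega)])]
    exact lemI2 m
  rw [lemS m, h2]

end RA

/-- If `Δ(λ) = 0` for all `λ ∈ ℂ`, then `N` is even and, with `m = N/2`,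
`u₋₁ = m(m+1)·p₁/(2·p₀)`. -/
theorem residue_formula (N : ℕ) (hN : 1 ≤ N) (um1 : ℂ) (u p : ℕ → ℂ) (hp0 : p 0 ≠ 0)
    (h : ∀ lam : ℂ, (DeltaPoly N um1 u p).eval lam = 0) :
    Even N ∧ um1 = ((N / 2 : ℕ) : ℂ) * (((N / 2 : ℕ) : ℂ) + 1) * p 1 / (2 * p 0) := by
  have hDel : DeltaPoly N um1 u p = 0 :=
    Polynomial.funext (fun lam => by rw [h lam, Polynomial.eval_zero])
  have hprod : ((-1:ℂ[X])^N * ∏ r : Fin N, C (RA.bb N r.1)) ≠ 0 := by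
    apply mul_ne_zero
    · exact pow_ne_zero _ (neg_ne_zero.mpr one_ne_zero)
    · rw [Finset.prod_ne_zero_iff]
      intro r _
      exact Polynomial.C_ne_zero.mpr (RA.bb_ne_zero N r.2)
  have hW : RA.W N um1 u p N = 0 := by
    have hde := RA.det_eq N um1 u p
    rw [hDel] at hde
    rcases mul_eq_zero.mp hde.symm with h1 | h2
    · exact h1
    · exact absurd h2 hprod
  rcases Nat.even_or_odd N with hev | hod
  · -- even case
    obtain ⟨k, rfl⟩ : ∃ k, N = 2*(k+1) := by
      obtain ⟨m, hm⟩ := hev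
      exact ⟨m - 1, by omega⟩
    refine ⟨⟨k+1, by ring⟩, ?_⟩
    have hcoeff : (RA.W (2*(k+1)) um1 u p (2*(k+1))).coeff (k+1)
        = um1 * RA.tc (2*(k+1)) um1 u p (2*(k+1)) + p 0 * RA.tc (2*(k+1)) um1 u p (2*k+1)
          + p 1 * RA.tc (2*(k+1)) um1 u p (2*k) := by
      have hwe := RA.W_coeff_even (2*(k+1)) um1 u p k
      rw [show 2*k+2 = 2*(k+1) by ring] at hwe
      exact hwe
    rw [hW, Polynomial.coeff_zero] at hcoeff
    have hO := RA.Omain um1 u p (k+1) (by omega) hp0 k (by omega)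
    have hstep := RA.Ostep um1 u p (k+1) k (le_refl _) hp0 (by
      rw [show 2*(k+1) = 2*k+2 by ring] at hO ⊢
      exact hO)
    rw [show 2*k+2 = 2*(k+1) by ring, ← hcoeff] at hstep
    have htcne : RA.tc (2*(k+1)) um1 u p (2*(k+1)) ≠ 0 :=
      RA.tc_even_ne (2*(k+1)) um1 u p hp0 (k+1) (le_refl _)
    have hsig0 : RA.sig (k+1) um1 p (k+1) = 0 := by
      have := hstep
      rw [mul_comm] at this
      have h0 : RA.tc (2*(k+1)) um1 u p (2*(k+1)) * RA.sig (k+1) um1 p (k+1) = 0 := by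
        rw [← hstep]
        ring
      rcases mul_eq_zero.mp h0 with hbad | hgood
      · exact absurd hbad htcne
      · exact hgood
    have heq : -um1 * p 0 * 4^(k+1)
        + p 1 * (((k+1:ℕ):ℂ)*(((k+1:ℕ):ℂ)+1) * 4^(k+1) / 2) = 0 := by
      rw [← RA.sig_eval um1 p (k+1)]
      exact hsig0
    have h4 : ((4:ℂ))^(k+1) ≠ 0 := pow_ne_zero _ (by norm_num)
    have hfin : um1 * (2 * p 0) = ((k+1:ℕ):ℂ) * (((k+1:ℕ):ℂ)+1) * p 1 := by
      apply mul_right_cancel₀ h4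
      push_cast at heq ⊢
      linear_combination (-2 : ℂ) * heq
    rw [show 2*(k+1)/2 = k+1 by omega]
    rw [eq_div_iff (mul_ne_zero two_ne_zero hp0)]
    push_cast at hfin ⊢
    linear_combination hfin
  · -- odd case: contradiction
    exfalso
    obtain ⟨s, rfl⟩ := hod
    have hco := RA.W_coeff_odd (2*s+1) um1 u p s
    rw [hW, Polynomial.coeff_zero] at hco
    rcases mul_eq_zero.mp hco.symm with h1 | h2
    · exact hp0 h1
    · exact RA.tc_even_ne (2*s+1) um1 u p hp0 s (by omega) h2
end
end

section
/- With the matrix M(λ) and Δ(λ) = det M(λ) as defined (N ≥ 1, p₀ ≠ 0): if N is odd, then Δ(λ), viewed as a polynomial in λ, has degree at most (N+1)/2, and its coefficient of λ^{(N+1)/2} equals (−1)^{(3N−1)/2} · (N!)² · p₀^{(N+1)/2} / ( 2^{(N−1)/2} · ((N−1)/2)! · (N−1)!! ), where (N−1)!! denotes the double factorial. In particular this coefficient is nonzero, so Δ is not identically zero when N is odd. -/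
open Polynomial

noncomputable section

namespace DeltaAux

variable {N : ℕ} {um1 : ℂ} {u p : ℕ → ℂ}

lemma M_diag {r c : Fin (N+1)} (h : (c:ℕ) = (r:ℕ)) : Mmat N um1 u p r c = C um1 := by
  simp only [Mmat, Matrix.of_apply]
  rw [if_pos h]

lemma M_below {r c : Fin (N+1)} (h : (c:ℕ) < (r:ℕ)) :
    Mmat N um1 u p r c
      = C (u ((r:ℕ) - (c:ℕ) - 1)) + X * C (p ((r:ℕ) - (c:ℕ) - 1)) := by
  have h1 : (c:ℕ) ≠ (r:ℕ) := by omega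
  simp only [Mmat, Matrix.of_apply]
  rw [if_neg h1, if_pos h]

lemma M_super {r c : Fin (N+1)} (h : (c:ℕ) = (r:ℕ) + 1) :
    Mmat N um1 u p r c = C (((((r:ℕ)+1) * (N - (r:ℕ)) : ℕ)) : ℂ) := by
  have h1 : (c:ℕ) ≠ (r:ℕ) := by omega
  have h2 : ¬ (c:ℕ) < (r:ℕ) := by omega
  simp only [Mmat, Matrix.of_apply]
  rw [if_neg h1, if_neg h2, if_pos h]

lemma M_zero {r c : Fin (N+1)} (h : (r:ℕ) + 1 < (c:ℕ)) :
    Mmat N um1 u p r c = 0 := by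
  have h1 : (c:ℕ) ≠ (r:ℕ) := by omega
  have h2 : ¬ (c:ℕ) < (r:ℕ) := by omega
  have h3 : (c:ℕ) ≠ (r:ℕ) + 1 := by omega
  simp only [Mmat, Matrix.of_apply]
  rw [if_neg h1, if_neg h2, if_neg h3]

lemma M_natDegree_le (r c : Fin (N+1)) :
    (Mmat N um1 u p r c).natDegree ≤ if (c:ℕ) < (r:ℕ) then 1 else 0 := by
  by_cases h : (c:ℕ) < (r:ℕ)
  · rw [if_pos h, M_below h]
    compute_degree
  · rw [if_neg h]
    rcases eq_or_lt_of_le (not_lt.mp h) with h1 | h1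
    · rw [M_diag h1.symm]; simp
    · by_cases h2 : (c:ℕ) = (r:ℕ) + 1
      · rw [M_super h2, natDegree_C]
      · rw [M_zero (by omega)]; simp



/-- partner index: even k ↦ k+1, odd k ↦ k-1 -/
def pairIdx (k : ℕ) : ℕ := if k % 2 = 0 then k + 1 else k - 1

lemma card_filter_lt {n m : ℕ} (hn : n = 2 * m) (σ : Equiv.Perm (Fin n))
    (h1 : ∀ i : Fin n, (i : ℕ) ≤ (σ i : ℕ) + 1) :
    (Finset.univ.filter fun i : Fin n => (i:ℕ) < (σ i : ℕ)).card ≤ m ∧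
      ((Finset.univ.filter fun i : Fin n => (i:ℕ) < (σ i : ℕ)).card = m →
        ∀ i : Fin n, (σ i : ℕ) = (i : ℕ) + 1 ∨ (σ i : ℕ) + 1 = (i : ℕ)) := by
  classical
  set f : Fin n → ℤ := fun i => ((σ i : ℕ) : ℤ) - ((i : ℕ) : ℤ) with hf
  set A := Finset.univ.filter (fun i : Fin n => (i:ℕ) < (σ i : ℕ)) with hA
  have hsum0 : ∑ i, f i = 0 := by
    have h2 : ∑ i : Fin n, ((σ i : ℕ) : ℤ) = ∑ i : Fin n, ((i:ℕ):ℤ) :=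
      Equiv.sum_comp σ (fun i : Fin n => ((i:ℕ):ℤ))
    simp [hf, Finset.sum_sub_distrib, h2]
  have hcompl : ∑ i ∈ A, f i + ∑ i ∈ Aᶜ, f i = 0 := by
    rw [Finset.sum_add_sum_compl]; exact hsum0
  have hmemA : ∀ i, i ∈ A ↔ (i:ℕ) < (σ i : ℕ) := by
    intro i; simp [hA]
  have hAlb : (A.card : ℤ) ≤ ∑ i ∈ A, f i := by
    calc (A.card : ℤ) = ∑ _i ∈ A, (1:ℤ) := by simp
    _ ≤ ∑ i ∈ A, f i := Finset.sum_le_sum (fun i hi => by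
        have := (hmemA i).mp hi; simp only [hf]; omega)
  have h3 : -(Aᶜ.card : ℤ) ≤ ∑ i ∈ Aᶜ, f i := by
    calc -(Aᶜ.card:ℤ) = ∑ _i ∈ Aᶜ, (-1:ℤ) := by simp
    _ ≤ _ := Finset.sum_le_sum (fun i _ => by
        have := h1 i; simp only [hf]; omega)
  have hcards : A.card + Aᶜ.card = n := by
    rw [Finset.card_add_card_compl]; simp
  have hcard_le : A.card ≤ m := by
    have h4 : (A.card : ℤ) ≤ (Aᶜ.card : ℤ) := by linarith
    have : A.card ≤ Aᶜ.card := by exact_mod_cast h4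
    omega
  refine ⟨hcard_le, ?_⟩
  intro hEq i
  have hc2 : Aᶜ.card = m := by omega
  have hsA : ∑ i ∈ A, f i = (m:ℤ) := by
    have hle : ∑ i ∈ A, f i ≤ (Aᶜ.card:ℤ) := by linarith
    rw [hc2] at hle
    have hge : (m:ℤ) ≤ ∑ i ∈ A, f i := by rw [← hEq]; exact hAlb
    linarith
  have hsAc : ∑ i ∈ Aᶜ, f i = -(m:ℤ) := by linarith
  have hA_each : ∀ j ∈ A, f j = 1 := by
    have h0 : ∑ j ∈ A, (f j - 1) = 0 := by
      rw [Finset.sum_sub_distrib, hsA]; simp [hEq]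
    intro j hj
    have := (Finset.sum_eq_zero_iff_of_nonneg (fun j hj => by
      have := (hmemA j).mp hj; simp only [hf, sub_nonneg]; omega)).mp h0 j hj
    omega
  have hAc_each : ∀ j ∈ Aᶜ, f j = -1 := by
    have h0 : ∑ j ∈ Aᶜ, (f j + 1) = 0 := by
      rw [Finset.sum_add_distrib, hsAc]; simp [hc2]
    intro j hj
    have := (Finset.sum_eq_zero_iff_of_nonneg (fun j hj => by
      have := h1 j; simp only [hf]; omega)).mp h0 j hj
    omega
  by_cases hiA : i ∈ A
  · left; have := hA_each i hiA; simp only [hf] at this; omega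
  · right; have := hAc_each i (Finset.mem_compl.mpr hiA); simp only [hf] at this; omega

lemma sigma_eq_pairIdx {n : ℕ} (σ : Equiv.Perm (Fin n))
    (h : ∀ i : Fin n, (σ i : ℕ) = (i : ℕ) + 1 ∨ (σ i : ℕ) + 1 = (i : ℕ)) :
    ∀ i : Fin n, (σ i : ℕ) = pairIdx (i : ℕ) := by
  suffices H : ∀ k : ℕ, ∀ hk : k < n, (σ ⟨k, hk⟩ : ℕ) = pairIdx k by
    intro i
    have := H (i : ℕ) i.isLt
    simpa using this
  intro k
  induction k using Nat.strong_induction_on with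
  | _ k IH =>
    intro hk
    rcases Nat.even_or_odd k with hke | hko
    · have hkm : k % 2 = 0 := Nat.even_iff.mp hke
      have hp : pairIdx k = k + 1 := by simp [pairIdx, hkm]
      rcases h ⟨k, hk⟩ with h' | h'
      · rw [hp]; simpa using h'
      · exfalso
        simp only at h'
        have hk0 : k ≠ 0 := by
          rintro rfl; simp at h'
        have hk2 : 2 ≤ k := by omega
        have h2 : k - 2 < n := by omega
        have IH2 := IH (k-2) (by omega) h2
        have hkm2 : (k-2) % 2 = 0 := by omega
        have hpe : pairIdx (k-2) = k - 1 := by simp [pairIdx, hkm2]; omega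
        have heq : σ ⟨k-2, h2⟩ = σ ⟨k, hk⟩ := by
          apply Fin.ext
          rw [IH2, hpe]
          omega
        have := σ.injective heq
        rw [Fin.mk.injEq] at this
        omega
    · have hkm : k % 2 = 1 := Nat.odd_iff.mp hko
      have hp : pairIdx k = k - 1 := by simp [pairIdx, hkm]
      have hk1 : 1 ≤ k := by omega
      have hlt : k - 1 < n := by omega
      obtain ⟨j, hj⟩ := σ.surjective ⟨k-1, hlt⟩
      have hjv : (σ j : ℕ) = k - 1 := by rw [hj]
      rcases h j with h' | h'
      · exfalso
        -- (j:ℕ) + 1 = k - 1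
        have hj2 : (j : ℕ) + 1 = k - 1 := by omega
        have hk3 : 3 ≤ k := by omega
        have hj3 : (j : ℕ) = k - 2 := by omega
        have IH2 := IH (k-2) (by omega) (by omega)
        have hkm2 : (k-2) % 2 = 1 := by omega
        have hpe : pairIdx (k-2) = k - 3 := by simp [pairIdx, hkm2]; omega
        have hjj : j = ⟨k-2, by omega⟩ := Fin.ext hj3
        rw [hjj] at hjv
        rw [IH2, hpe] at hjv
        omega
      · have hjk : (j : ℕ) = k := by omega
        have hjj : j = ⟨k, hk⟩ := Fin.ext hjk
        rw [hjj] at hjv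
        rw [hjv, hp]



def ccN (N t : ℕ) : ℂ := (((2*t+1) * (N - 2*t) : ℕ) : ℂ)

def Bmat (N m : ℕ) (p0 : ℂ) (t : Fin m) : Matrix (Fin 2) (Fin 2) ℂ :=
  Matrix.of fun i j : Fin 2 =>
    if (i:ℕ) = 1 ∧ (j:ℕ) = 0 then p0
    else if (i:ℕ) = 0 ∧ (j:ℕ) = 1 then ccN N (t:ℕ) else 0

def eIdx (N m : ℕ) (hm : N + 1 = 2 * m) : Fin 2 × Fin m ≃ Fin (N+1) where
  toFun := fun x => ⟨2 * (x.2:ℕ) + (x.1:ℕ), by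
    have := x.1.isLt; have := x.2.isLt; omega⟩
  invFun := fun x => (⟨(x:ℕ) % 2, by omega⟩, ⟨(x:ℕ)/2, by have := x.isLt; omega⟩)
  left_inv := by
    rintro ⟨j, t⟩
    have hj := j.isLt; have ht := t.isLt
    ext
    · simp; omega
    · simp; omega
  right_inv := fun x => by
    ext; simp; omega

def Kmat (N m : ℕ) (hm : N + 1 = 2 * m) (p0 : ℂ) : Matrix (Fin (N+1)) (Fin (N+1)) ℂ :=
  Matrix.reindex (eIdx N m hm) (eIdx N m hm) (Matrix.blockDiagonal (Bmat N m p0))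

lemma eIdx_zero (N m : ℕ) (hm : N + 1 = 2 * m) (t : Fin m) :
    ((eIdx N m hm (0, t)) : ℕ) = 2 * (t:ℕ) := by simp [eIdx]

lemma eIdx_one (N m : ℕ) (hm : N + 1 = 2 * m) (t : Fin m) :
    ((eIdx N m hm (1, t)) : ℕ) = 2 * (t:ℕ) + 1 := by simp [eIdx]

lemma K_unfold (N m : ℕ) (hm : N + 1 = 2 * m) (p0 : ℂ) (r c : Fin (N+1)) :
    Kmat N m hm p0 r c =
      if ((r:ℕ)/2 : ℕ) = (c:ℕ)/2 then
        (if (r:ℕ) % 2 = 1 ∧ (c:ℕ) % 2 = 0 then p0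
         else if (r:ℕ) % 2 = 0 ∧ (c:ℕ) % 2 = 1 then ccN N ((r:ℕ)/2) else 0)
      else 0 := by
  simp only [Kmat, Matrix.reindex_apply, Matrix.submatrix_apply, eIdx,
    Equiv.coe_fn_symm_mk, Matrix.blockDiagonal_apply, Bmat, Matrix.of_apply,
    Fin.mk.injEq]

lemma K_p0 {N m : ℕ} {hm : N + 1 = 2 * m} {p0 : ℂ} {r c : Fin (N+1)}
    (hc : (c:ℕ) % 2 = 0) (hr : (r:ℕ) = (c:ℕ) + 1) :
    Kmat N m hm p0 r c = p0 := by
  rw [K_unfold, if_pos (by omega), if_pos (by omega)]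

lemma K_cc {N m : ℕ} {hm : N + 1 = 2 * m} {p0 : ℂ} {r c : Fin (N+1)}
    (hc : (c:ℕ) % 2 = 1) (hr : (r:ℕ) + 1 = (c:ℕ)) :
    Kmat N m hm p0 r c = ccN N ((r:ℕ)/2) := by
  rw [K_unfold, if_pos (by omega), if_neg (by omega), if_pos (by omega)]

lemma K_zero {N m : ℕ} {hm : N + 1 = 2 * m} {p0 : ℂ} {r c : Fin (N+1)}
    (hne : (r:ℕ) ≠ pairIdx (c:ℕ)) :
    Kmat N m hm p0 r c = 0 := by
  rw [K_unfold]
  rcases Nat.even_or_odd (c:ℕ) with hc | hc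
  · have hc0 : (c:ℕ) % 2 = 0 := Nat.even_iff.mp hc
    have hne2 : (r:ℕ) ≠ (c:ℕ) + 1 := by simpa [pairIdx, hc0] using hne
    split_ifs <;> first | rfl | (exfalso; omega)
  · have hc1 : (c:ℕ) % 2 = 1 := Nat.odd_iff.mp hc
    have hne2 : (r:ℕ) ≠ (c:ℕ) - 1 := by simpa [pairIdx, hc1] using hne
    split_ifs <;> first | rfl | (exfalso; omega)

lemma detK (N m : ℕ) (hm : N + 1 = 2 * m) (p0 : ℂ) :
    (Kmat N m hm p0).det = ∏ t : Fin m, (-(ccN N (t:ℕ) * p0)) := by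
  rw [Kmat, Matrix.det_reindex_self, Matrix.det_blockDiagonal]
  apply Finset.prod_congr rfl
  intro t _
  rw [Matrix.det_fin_two]
  simp [Bmat]

lemma prod_split {γ : Type*} [CommMonoid γ] (N m : ℕ) (hm : N + 1 = 2 * m)
    (f : Fin (N+1) → γ) :
    ∏ i, f i = ∏ t : Fin m, (f (eIdx N m hm (0, t)) * f (eIdx N m hm (1, t))) := by
  rw [← Equiv.prod_comp (eIdx N m hm) f, Fintype.prod_prod_type, Fin.prod_univ_two,
    ← Finset.prod_mul_distrib]


lemma natDegree_term_le {N : ℕ} {um1 : ℂ} {u p : ℕ → ℂ} (σ : Equiv.Perm (Fin (N+1))) :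
    (∏ i, Mmat N um1 u p (σ i) i).natDegree ≤
      (Finset.univ.filter fun i : Fin (N+1) => (i:ℕ) < (σ i:ℕ)).card := by
  refine (Polynomial.natDegree_prod_le _ _).trans ?_
  calc ∑ i, (Mmat N um1 u p (σ i) i).natDegree
      ≤ ∑ i : Fin (N+1), (if (i:ℕ) < ((σ i):ℕ) then 1 else 0) :=
        Finset.sum_le_sum (fun i _ => M_natDegree_le _ _)
    _ = _ := by rw [Finset.sum_boole]; simp

lemma term_eq_zero {N : ℕ} {um1 : ℂ} {u p : ℕ → ℂ} {σ : Equiv.Perm (Fin (N+1))}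
    {i1 : Fin (N+1)} (h : ((σ i1 : ℕ)) + 1 < (i1:ℕ)) :
    (∏ i, Mmat N um1 u p (σ i) i) = 0 :=
  Finset.prod_eq_zero (Finset.mem_univ i1) (M_zero h)

lemma degree_term_le {N m : ℕ} (hm : N + 1 = 2 * m) {um1 : ℂ} {u p : ℕ → ℂ}
    (σ : Equiv.Perm (Fin (N+1))) :
    (∏ i, Mmat N um1 u p (σ i) i).degree ≤ (m : WithBot ℕ) := by
  by_cases hz : ∀ i : Fin (N+1), (i:ℕ) ≤ (σ i:ℕ) + 1
  · refine Polynomial.natDegree_le_iff_degree_le.mp ?_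
    exact (natDegree_term_le σ).trans (card_filter_lt hm σ hz).1
  · push_neg at hz
    obtain ⟨i1, hi1⟩ := hz
    rw [term_eq_zero hi1]
    simp

lemma coeff_term_eq {N m : ℕ} (hm : N + 1 = 2 * m) (hm1 : 1 ≤ m)
    {um1 : ℂ} {u p : ℕ → ℂ} (σ : Equiv.Perm (Fin (N+1))) :
    (∏ i, Mmat N um1 u p (σ i) i).coeff m = ∏ i, Kmat N m hm (p 0) (σ i) i := by
  by_cases hstruct : ∀ i : Fin (N+1), (σ i : ℕ) = pairIdx (i:ℕ)
  · -- structured case: compute both sides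
    have hR : ∏ i, Kmat N m hm (p 0) (σ i) i = ∏ t : Fin m, (p 0 * ccN N (t:ℕ)) := by
      rw [prod_split N m hm]
      apply Finset.prod_congr rfl
      intro t _
      have h0 := eIdx_zero N m hm t
      have h1 := eIdx_one N m hm t
      have hs0 : ((σ (eIdx N m hm (0, t)) : ℕ)) = 2 * (t:ℕ) + 1 := by
        rw [hstruct]; rw [h0]; simp [pairIdx, Nat.mul_mod_right]
      have hs1 : ((σ (eIdx N m hm (1, t)) : ℕ)) = 2 * (t:ℕ) := by
        rw [hstruct]; rw [h1]; simp [pairIdx, Nat.mul_mod_right]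
      rw [K_p0 (by omega : ((eIdx N m hm (0,t)) : ℕ) % 2 = 0) (by omega),
          K_cc (by omega : ((eIdx N m hm (1,t)) : ℕ) % 2 = 1) (by omega)]
      rw [show (σ (eIdx N m hm (1, t)) : ℕ) / 2 = (t:ℕ) by omega]
    have hL : ∏ i, Mmat N um1 u p (σ i) i
        = ∏ t : Fin m, ((C (u 0) + X * C (p 0)) * C (ccN N (t:ℕ))) := by
      rw [prod_split N m hm]
      apply Finset.prod_congr rfl
      intro t _
      have h0 := eIdx_zero N m hm t
      have h1 := eIdx_one N m hm t
      have hs0 : ((σ (eIdx N m hm (0, t)) : ℕ)) = 2 * (t:ℕ) + 1 := by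
        rw [hstruct]; rw [h0]; simp [pairIdx, Nat.mul_mod_right]
      have hs1 : ((σ (eIdx N m hm (1, t)) : ℕ)) = 2 * (t:ℕ) := by
        rw [hstruct]; rw [h1]; simp [pairIdx, Nat.mul_mod_right]
      rw [M_below (by omega : ((eIdx N m hm (0,t)) : ℕ) < (σ (eIdx N m hm (0,t)) : ℕ)),
          M_super (by omega : ((eIdx N m hm (1,t)) : ℕ) = (σ (eIdx N m hm (1,t)) : ℕ) + 1)]
      rw [show (σ (eIdx N m hm (0,t)) : ℕ) - ((eIdx N m hm (0,t)) : ℕ) - 1 = 0 by omega]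
      rw [show ((σ (eIdx N m hm (1,t)) : ℕ) + 1) * (N - (σ (eIdx N m hm (1,t)) : ℕ))
            = (2*(t:ℕ)+1) * (N - 2*(t:ℕ)) by rw [hs1]]
      rfl
    rw [hL, hR]
    have hcard : (Finset.univ : Finset (Fin m)).card = m := by simp
    have := Polynomial.coeff_prod_of_natDegree_le
      (s := (Finset.univ : Finset (Fin m)))
      (f := fun t => (C (u 0) + X * C (p 0)) * C (ccN N (t:ℕ))) 1
      (fun t _ => by
        refine Polynomial.natDegree_mul_le.trans ?_
        simp only [natDegree_C, add_zero]
        compute_degree)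
    rw [hcard, mul_one] at this
    rw [this]
    apply Finset.prod_congr rfl
    intro t _
    rw [Polynomial.coeff_mul_C, Polynomial.coeff_add, Polynomial.coeff_C,
      if_neg (one_ne_zero), show (1:ℕ) = 0 + 1 from rfl, Polynomial.coeff_X_mul,
      Polynomial.coeff_C_zero, zero_add]
  · push_neg at hstruct
    obtain ⟨i0, hi0⟩ := hstruct
    have hR0 : ∏ i, Kmat N m hm (p 0) (σ i) i = 0 :=
      Finset.prod_eq_zero (Finset.mem_univ i0) (K_zero hi0)
    rw [hR0]
    by_cases hz : ∀ i : Fin (N+1), (i:ℕ) ≤ (σ i:ℕ) + 1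
    · obtain ⟨hle, heqc⟩ := card_filter_lt hm σ hz
      rcases lt_or_eq_of_le hle with hlt | hEq
      · apply Polynomial.coeff_eq_zero_of_natDegree_lt
        exact lt_of_le_of_lt (natDegree_term_le σ) hlt
      · exact absurd (sigma_eq_pairIdx σ (heqc hEq) i0) hi0
    · push_neg at hz
      obtain ⟨i1, hi1⟩ := hz
      rw [term_eq_zero hi1]
      simp

lemma prod_odds (m : ℕ) :
    ∏ t ∈ Finset.range m, (2*t+1) = Nat.doubleFactorial (2*m-1) := by
  induction m with
  | zero => simp [Nat.doubleFactorial]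
  | succ k ih =>
    rw [Finset.prod_range_succ, ih, show 2*(k+1)-1 = (2*k)+1 by omega,
      Nat.doubleFactorial_add_one]
    rw [mul_comm]

lemma nat_identity (N m : ℕ) (hm : N + 1 = 2*m) (hm1 : 1 ≤ m) :
    (∏ t ∈ Finset.range m, ((2*t+1) * (N - 2*t)))
      * (2^(m-1) * Nat.factorial (m-1) * Nat.doubleFactorial (N-1))
      = (Nat.factorial N)^2 := by
  have hsplit : ∏ t ∈ Finset.range m, ((2*t+1) * (N - 2*t))
      = (∏ t ∈ Finset.range m, (2*t+1)) * (∏ t ∈ Finset.range m, (N - 2*t)) :=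
    Finset.prod_mul_distrib
  have h1 : ∏ t ∈ Finset.range m, (2*t+1) = Nat.doubleFactorial N := by
    rw [prod_odds, show 2*m-1 = N by omega]
  have h2 : ∏ t ∈ Finset.range m, (N - 2*t) = Nat.doubleFactorial N := by
    have hrefl := Finset.prod_range_reflect (fun j => 2*j+1) m
    have : ∏ t ∈ Finset.range m, (N - 2*t)
        = ∏ t ∈ Finset.range m, (2*(m-1-t)+1) := by
      apply Finset.prod_congr rfl
      intro t ht
      have := Finset.mem_range.mp ht
      omega
    rw [this, hrefl, prod_odds, show 2*m-1 = N by omega]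
  have h3 : Nat.doubleFactorial (N-1) = 2^(m-1) * Nat.factorial (m-1) := by
    have := Nat.doubleFactorial_two_mul (m-1)
    rwa [show 2*(m-1) = N-1 by omega] at this
  have h4 : Nat.factorial N = Nat.doubleFactorial N * Nat.doubleFactorial (N-1) := by
    have := Nat.factorial_eq_mul_doubleFactorial (N-1)
    rwa [show N-1+1 = N by omega] at this
  rw [hsplit, h1, h2, ← h3, h4]
  ring

end DeltaAux

/-- For odd `N`, the polynomial `Δ(λ)` has degree at most `(N+1)/2`, its coefficient of
`λ^{(N+1)/2}` equals
`(−1)^{(3N−1)/2}·(N!)²·p₀^{(N+1)/2} / (2^{(N−1)/2}·((N−1)/2)!·(N−1)‼)`;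
in particular this coefficient is nonzero and `Δ` is not identically zero. -/
theorem delta_leading_coeff_odd (N : ℕ) (hN : 1 ≤ N) (hodd : Odd N)
    (um1 : ℂ) (u p : ℕ → ℂ) (hp0 : p 0 ≠ 0) :
    (DeltaPoly N um1 u p).degree ≤ (((N + 1) / 2 : ℕ) : WithBot ℕ) ∧
    (DeltaPoly N um1 u p).coeff ((N + 1) / 2) =
      (-1) ^ ((3 * N - 1) / 2) * ((N.factorial : ℂ)) ^ 2 * p 0 ^ ((N + 1) / 2) /
        (2 ^ ((N - 1) / 2) * ((((N - 1) / 2).factorial : ℕ) : ℂ) *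
          ((Nat.doubleFactorial (N - 1) : ℕ) : ℂ)) ∧
    (DeltaPoly N um1 u p).coeff ((N + 1) / 2) ≠ 0 ∧
    DeltaPoly N um1 u p ≠ 0 := by
  have hodd' : N % 2 = 1 := Nat.odd_iff.mp hodd
  set mm := (N + 1) / 2 with hmm
  have hm : N + 1 = 2 * mm := by omega
  have hm1 : 1 ≤ mm := by omega
  have hcoeff : (DeltaPoly N um1 u p).coeff mm
      = ∏ t : Fin mm, (-(DeltaAux.ccN N (t:ℕ) * p 0)) := by
    rw [DeltaPoly, Matrix.det_apply', Polynomial.finset_sum_coeff]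
    have hstep : ∀ σ : Equiv.Perm (Fin (N+1)),
        (((Equiv.Perm.sign σ : ℤ) : ℂ[X]) * ∏ i, Mmat N um1 u p (σ i) i).coeff mm
          = ((Equiv.Perm.sign σ : ℤ) : ℂ) * ∏ i, DeltaAux.Kmat N mm hm (p 0) (σ i) i := by
      intro σ
      rw [← Polynomial.C_eq_intCast, Polynomial.coeff_C_mul,
        DeltaAux.coeff_term_eq hm hm1 σ]
    rw [Finset.sum_congr rfl (fun σ _ => hstep σ), ← Matrix.det_apply',
      DeltaAux.detK N mm hm (p 0)]
  have hprodval : ∏ t : Fin mm, (-(DeltaAux.ccN N (t:ℕ) * p 0))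
      = (-1)^mm * ((∏ t ∈ Finset.range mm, ((2*t+1) * (N - 2*t)) : ℕ) : ℂ)
          * p 0 ^ mm := by
    rw [Fin.prod_univ_eq_prod_range (fun t => -(DeltaAux.ccN N t * p 0)) mm]
    calc ∏ t ∈ Finset.range mm, (-(DeltaAux.ccN N t * p 0))
        = ∏ t ∈ Finset.range mm,
            ((-1) * ((((2*t+1) * (N - 2*t) : ℕ)) : ℂ) * p 0) := by
          apply Finset.prod_congr rfl; intro t _
          rw [DeltaAux.ccN]; ring
      _ = _ := by
          rw [Finset.prod_mul_distrib, Finset.prod_mul_distrib, Finset.prod_const,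
            Finset.prod_const, Finset.card_range, Nat.cast_prod]
  have hval : (DeltaPoly N um1 u p).coeff mm
      = (-1)^mm * ((∏ t ∈ Finset.range mm, ((2*t+1) * (N - 2*t)) : ℕ) : ℂ)
          * p 0 ^ mm := hcoeff.trans hprodval
  have hPn0 : (∏ t ∈ Finset.range mm, ((2*t+1) * (N - 2*t))) ≠ 0 := by
    refine (Finset.prod_pos fun i hi => ?_).ne'
    have := Finset.mem_range.mp hi
    exact Nat.mul_pos (by omega) (by omega)
  have hne : (DeltaPoly N um1 u p).coeff mm ≠ 0 := by
    rw [hval]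
    exact mul_ne_zero (mul_ne_zero (pow_ne_zero _ (by norm_num))
      (Nat.cast_ne_zero.mpr hPn0)) (pow_ne_zero _ hp0)
  have hD : ((2:ℂ)^(mm-1) * ((Nat.factorial (mm-1) : ℕ) : ℂ)
      * ((Nat.doubleFactorial (N-1) : ℕ) : ℂ)) ≠ 0 := by
    refine mul_ne_zero (mul_ne_zero (pow_ne_zero _ (by norm_num)) ?_) ?_
    · exact Nat.cast_ne_zero.mpr (Nat.factorial_pos _).ne'
    · exact Nat.cast_ne_zero.mpr (Nat.doubleFactorial_pos _).ne'
  have hcast : ((∏ t ∈ Finset.range mm, ((2*t+1) * (N - 2*t)) : ℕ) : ℂ)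
      * ((2:ℂ)^(mm-1) * ((Nat.factorial (mm-1) : ℕ) : ℂ)
        * ((Nat.doubleFactorial (N-1) : ℕ) : ℂ))
      = ((N.factorial : ℂ))^2 := by
    have := DeltaAux.nat_identity N mm hm hm1
    exact_mod_cast congrArg (Nat.cast : ℕ → ℂ) this
  have hsign : ((-1:ℂ))^((3*N-1)/2) = (-1)^mm := by
    rw [show (3*N-1)/2 = mm + 2*(mm-1) by omega, pow_add, pow_mul]
    norm_num
  refine ⟨?_, ?_, hne, fun h => hne (by rw [h]; simp)⟩
  · rw [DeltaPoly, Matrix.det_apply']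
    refine (Polynomial.degree_sum_le _ _).trans ?_
    refine Finset.sup_le fun σ _ => ?_
    refine (Polynomial.degree_mul_le _ _).trans ?_
    have h1 : ((Equiv.Perm.sign σ : ℤ) : ℂ[X]).degree ≤ 0 :=
      Polynomial.degree_intCast_le _
    have h2 := DeltaAux.degree_term_le hm (um1 := um1) (u := u) (p := p) σ
    calc _ ≤ (0 : WithBot ℕ) + (mm : WithBot ℕ) := add_le_add h1 h2
      _ = (mm : WithBot ℕ) := zero_add _
  · rw [hval, show (N-1)/2 = mm - 1 by omega, eq_div_iff hD, hsign]
    linear_combination ((-1:ℂ)^mm * p 0 ^ mm) * hcast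
end
end

section
/- For every natural number m, 2 · ∑_{j=0}^{m} (m−j)·(j+1) · C(2(m−j), m−j) · C(2(j+1), j+1) = m·(m+1)·4^m, where C(2k, k) denotes the central binomial coefficient. -/
open Finset

private def cbS (n : ℕ) : ℕ :=
  ∑ j ∈ range (n + 1), Nat.centralBinom j * Nat.centralBinom (n - j)

private def cbT (n : ℕ) : ℕ :=
  ∑ j ∈ range (n + 1), j * (Nat.centralBinom j * Nat.centralBinom (n - j))

private def cbV (n : ℕ) : ℕ :=
  ∑ j ∈ range (n + 1), j * (n - j) * (Nat.centralBinom j * Nat.centralBinom (n - j))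

private lemma cbT_refl (n : ℕ) :
    cbT n = ∑ j ∈ range (n + 1), (n - j) * (Nat.centralBinom j * Nat.centralBinom (n - j)) := by
  rw [cbT, ← Finset.sum_range_reflect]
  apply Finset.sum_congr rfl
  intro j hj
  have hj' : j ≤ n := by simpa [Nat.lt_succ_iff] using hj
  simp [Nat.sub_sub_self hj', mul_comm]

private lemma two_cbT (n : ℕ) : 2 * cbT n = n * cbS n := by
  rw [two_mul]
  nth_rewrite 2 [cbT_refl]
  rw [cbT, cbS, ← Finset.sum_add_distrib, Finset.mul_sum]
  apply Finset.sum_congr rfl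
  intro j hj
  have hj' : j ≤ n := by simpa [Nat.lt_succ_iff] using hj
  rw [← add_mul, Nat.add_sub_cancel' hj']

private lemma cbT_succ (n : ℕ) : cbT (n + 1) = 4 * cbT n + 2 * cbS n := by
  rw [cbT, Finset.sum_range_succ']
  simp only [Nat.succ_sub_succ, mul_zero, zero_mul, add_zero]
  rw [cbT, cbS, Finset.mul_sum, Finset.mul_sum, ← Finset.sum_add_distrib]
  apply Finset.sum_congr rfl
  intro j hj
  have h := Nat.succ_mul_centralBinom_succ j
  calc (j + 1) * (Nat.centralBinom (j + 1) * Nat.centralBinom (n - j))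
      = ((j + 1) * Nat.centralBinom (j + 1)) * Nat.centralBinom (n - j) := by ring
    _ = (2 * (2 * j + 1) * Nat.centralBinom j) * Nat.centralBinom (n - j) := by rw [h]
    _ = 4 * (j * (Nat.centralBinom j * Nat.centralBinom (n - j)))
        + 2 * (Nat.centralBinom j * Nat.centralBinom (n - j)) := by ring

private lemma cbS_eq (n : ℕ) : cbS n = 4 ^ n := by
  induction n with
  | zero => simp [cbS, Nat.centralBinom]
  | succ n ih =>
    have h1 : (n + 1) * cbS (n + 1) = 2 * cbT (n + 1) := (two_cbT (n + 1)).symm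
    have h2 : 2 * cbT (n + 1) = 4 * (2 * cbT n) + 4 * cbS n := by rw [cbT_succ]; ring
    rw [two_cbT n, ih] at h2
    have h3 : (n + 1) * cbS (n + 1) = (n + 1) * (4 ^ (n + 1)) := by
      rw [h1, h2]; ring
    exact Nat.eq_of_mul_eq_mul_left (Nat.succ_pos n) h3

private lemma two_cbT_eq (n : ℕ) : 2 * cbT n = n * 4 ^ n := by
  rw [two_cbT, cbS_eq]

private lemma cbV_succ (n : ℕ) : cbV (n + 1) = 4 * cbV n + 2 * cbT n := by
  rw [cbV, Finset.sum_range_succ']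
  simp only [Nat.succ_sub_succ, mul_zero, zero_mul, add_zero]
  rw [cbV, cbT_refl, Finset.mul_sum, Finset.mul_sum, ← Finset.sum_add_distrib]
  apply Finset.sum_congr rfl
  intro j hj
  have h := Nat.succ_mul_centralBinom_succ j
  calc (j + 1) * (n - j) * (Nat.centralBinom (j + 1) * Nat.centralBinom (n - j))
      = ((j + 1) * Nat.centralBinom (j + 1)) * ((n - j) * Nat.centralBinom (n - j)) := by ring
    _ = (2 * (2 * j + 1) * Nat.centralBinom j) * ((n - j) * Nat.centralBinom (n - j)) := by rw [h]
    _ = 4 * (j * (n - j) * (Nat.centralBinom j * Nat.centralBinom (n - j)))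
        + 2 * ((n - j) * (Nat.centralBinom j * Nat.centralBinom (n - j))) := by ring

private lemma two_cbV (n : ℕ) : 2 * cbV (n + 1) = n * (n + 1) * 4 ^ n := by
  induction n with
  | zero =>
    simp [cbV, Finset.sum_range_succ]
  | succ n ih =>
    have h : 2 * cbV (n + 2) = 4 * (2 * cbV (n + 1)) + 2 * (2 * cbT (n + 1)) := by
      rw [cbV_succ]; ring
    rw [ih, two_cbT_eq] at h
    rw [h]; ring

/-- `2·∑_{j=0}^{m} (m−j)·(j+1)·C(2(m−j),m−j)·C(2(j+1),j+1) = m·(m+1)·4^m`. -/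
theorem centralBinom_weighted_convolution (m : ℕ) :
    2 * ∑ j ∈ Finset.range (m + 1),
        (m - j) * (j + 1) * Nat.centralBinom (m - j) * Nat.centralBinom (j + 1) =
      m * (m + 1) * 4 ^ m := by
  have key : ∑ j ∈ Finset.range (m + 1),
      (m - j) * (j + 1) * Nat.centralBinom (m - j) * Nat.centralBinom (j + 1)
      = 4 * cbV m + 2 * cbT m := by
    rw [cbV, cbT_refl, Finset.mul_sum, Finset.mul_sum, ← Finset.sum_add_distrib]
    apply Finset.sum_congr rfl
    intro j hj
    have h := Nat.succ_mul_centralBinom_succ j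
    calc (m - j) * (j + 1) * Nat.centralBinom (m - j) * Nat.centralBinom (j + 1)
        = ((j + 1) * Nat.centralBinom (j + 1)) * ((m - j) * Nat.centralBinom (m - j)) := by ring
      _ = (2 * (2 * j + 1) * Nat.centralBinom j) * ((m - j) * Nat.centralBinom (m - j)) := by
          rw [h]
      _ = 4 * (j * (m - j) * (Nat.centralBinom j * Nat.centralBinom (m - j)))
          + 2 * ((m - j) * (Nat.centralBinom j * Nat.centralBinom (m - j))) := by ring
  rw [key]
  match m with
  | 0 => simp [cbV, cbT]
  | n + 1 =>
    have h : 2 * (4 * cbV (n + 1) + 2 * cbT (n + 1))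
        = 4 * (2 * cbV (n + 1)) + 2 * (2 * cbT (n + 1)) := by ring
    rw [h, two_cbV, two_cbT_eq]
    ring
end

section
/- Let K be a commutative ring equipped with a derivation d (written f ↦ f′), let P ∈ K be a unit, and let g ∈ K. Define maps L, L̃, D : K → K by L f = P⁻¹·((f′ − g·f)′ + g·(f′ − g·f)), L̃ f = P⁻¹·((f′ + g·f)′ − (g + P′·P⁻¹)·(f′ + g·f)), and D f = f′ − g·f. Then for every f ∈ K one has L̃(D f) = D(L f). -/
/-- Intertwining property of the Darboux transformation: for a commutative ring `K` with a
derivation `d` (an additive map satisfying the Leibniz rule), a unit `P` and `g ∈ K`,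
setting `L f = P⁻¹·((f′ − g·f)′ + g·(f′ − g·f))`,
`L̃ f = P⁻¹·((f′ + g·f)′ − (g + P′·P⁻¹)·(f′ + g·f))` and `D f = f′ − g·f`,
one has `L̃(D f) = D(L f)` for all `f`. -/
theorem darboux_intertwining (K : Type*) [CommRing K] (d : K →+ K)
    (hd : ∀ a b : K, d (a * b) = a * d b + d a * b)
    (P : Kˣ) (g : K)
    (L Lt D : K → K)
    (hL : ∀ f, L f = (↑P⁻¹ : K) * (d (d f - g * f) + g * (d f - g * f)))
    (hLt : ∀ f, Lt f =
      (↑P⁻¹ : K) * (d (d f + g * f) - (g + d (↑P : K) * (↑P⁻¹ : K)) * (d f + g * f)))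
    (hD : ∀ f, D f = d f - g * f) :
    ∀ f : K, Lt (D f) = D (L f) := by
  intro f
  set q : K := (↑P⁻¹ : K) with hqdef
  have hq : (↑P : K) * q = 1 := P.mul_inv
  have hdq : d q = -(d (↑P : K) * q * q) := by
    have hone : d (1 : K) = 0 := by
      have := hd 1 1
      simp only [one_mul, mul_one] at this
      linear_combination -this
    have h1 : d ((↑P : K) * q) = 0 := by rw [hq, hone]
    rw [hd] at h1
    have := congrArg (fun x => q * x) h1
    simp only [mul_zero, mul_add] at this
    have h2 : q * ((↑P : K) * d q) = d q := by
      rw [← mul_assoc, mul_comm q, hq, one_mul]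
    linear_combination this - h2
  simp only [hLt, hL, hD, map_sub, map_add, hd]
  ring_nf
  rw [hdq]
  ring_nf
end

section
/- Let f, T₀, T₁, y₀, y₁ be complex polynomials with f nonconstant and T₀, T₁, y₀, y₁ nonzero, and let ∘ denote polynomial composition. Then: (a) if ỹ₀ is a polynomial with Wr(y₀, ỹ₀) = T₀·y₁², then Wr(y₀∘f, ỹ₀∘f) = (f′·(T₀∘f))·(y₁∘f)²; consequently, if (y₀,y₁) is fertile with respect to (T₀,T₁), then (y₀∘f, y₁∘f) is fertile with respect to (f′·(T₀∘f), f′·(T₁∘f)); and (b) if a pair (u₀,u₁) is obtained from (y₀,y₁) by a finite sequence of reproductions with respect to (T₀,T₁), then (u₀∘f, u₁∘f) is obtained from (y₀∘f, y₁∘f) by a finite sequence of reproductions with respect to (f′·(T₀∘f), f′·(T₁∘f)). -/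
open Polynomial

noncomputable section

/-- The Wronskian of two polynomials: `Wr(f,g) = f·g′ − f′·g`. -/
def pWr (f g : ℂ[X]) : ℂ[X] := f * derivative g - derivative f * g

/-- A pair `y = (y₀,y₁)` of nonzero polynomials is fertile with respect to a pair
`T = (T₀,T₁)` if there exist `ỹ₀, ỹ₁` with `Wr(y₀,ỹ₀) = T₀·y₁²` and `Wr(y₁,ỹ₁) = T₁·y₀²`. -/
def Fertile (T y : ℂ[X] × ℂ[X]) : Prop :=
  y.1 ≠ 0 ∧ y.2 ≠ 0 ∧
  ∃ ty0 ty1 : ℂ[X], pWr y.1 ty0 = T.1 * y.2 ^ 2 ∧ pWr y.2 ty1 = T.2 * y.1 ^ 2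

/-- Reproduction in direction 0: replace `(y₀,y₁)` by `(ỹ₀,y₁)` with `Wr(y₀,ỹ₀) = T₀·y₁²`. -/
def Reprod0 (T y z : ℂ[X] × ℂ[X]) : Prop :=
  z.2 = y.2 ∧ pWr y.1 z.1 = T.1 * y.2 ^ 2

/-- Reproduction in direction 1: replace `(y₀,y₁)` by `(y₀,ỹ₁)` with `Wr(y₁,ỹ₁) = T₁·y₀²`. -/
def Reprod1 (T y z : ℂ[X] × ℂ[X]) : Prop :=
  z.1 = y.1 ∧ pWr y.2 z.2 = T.2 * y.1 ^ 2

/-- Reproduction (in either direction). -/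
def Reprod (T y z : ℂ[X] × ℂ[X]) : Prop := Reprod0 T y z ∨ Reprod1 T y z

/-- A pair is super-fertile w.r.t. `T` if every pair obtained from it by a finite (possibly
empty) sequence of reproductions w.r.t. `T` is fertile w.r.t. `T`. -/
def SuperFertile (T y : ℂ[X] × ℂ[X]) : Prop :=
  ∀ z, Relation.ReflTransGen (Reprod T) y z → Fertile T z

/-- A pair `(y₀,y₁)` is generic w.r.t. `(T₀,T₁)`: `y₀,y₁` squarefree, coprime to each other,
and `yᵢ` coprime with `Tᵢ`. -/
def Generic (T y : ℂ[X] × ℂ[X]) : Prop :=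
  Squarefree y.1 ∧ Squarefree y.2 ∧ IsCoprime y.1 y.2 ∧
    IsCoprime y.1 T.1 ∧ IsCoprime y.2 T.2

/-- A pair represents a critical point w.r.t. `T` if it is generic and fertile w.r.t. `T`. -/
def IsCriticalPt (T y : ℂ[X] × ℂ[X]) : Prop := Generic T y ∧ Fertile T y

/-- A pair lies in a population of critical points corresponding to `T` if it is obtained by a
finite (possibly empty) sequence of reproductions from a pair representing a critical point. -/
def InPopulation (T y : ℂ[X] × ℂ[X]) : Prop :=
  ∃ y₀, IsCriticalPt T y₀ ∧ Relation.ReflTransGen (Reprod T) y₀ y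


lemma comp_ne_zero' (p f : ℂ[X]) (hp : p ≠ 0) (hf : 0 < f.natDegree) : p.comp f ≠ 0 := by
  intro h
  rcases (Polynomial.comp_eq_zero_iff).1 h with h | ⟨_, hC⟩
  · exact hp h
  · rw [hC, Polynomial.natDegree_C] at hf
    exact lt_irrefl 0 hf

lemma pWr_comp (p q f : ℂ[X]) :
    pWr (p.comp f) (q.comp f) = (pWr p q).comp f * derivative f := by
  unfold pWr
  rw [Polynomial.derivative_comp, Polynomial.derivative_comp, Polynomial.sub_comp,
    Polynomial.mul_comp, Polynomial.mul_comp]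
  ring

/-- Change of variables in populations: composing with a nonconstant polynomial `f`
transforms Wronskian equations, fertility, and sequences of reproductions, with
`(T₀,T₁)` replaced by `(f′·(T₀∘f), f′·(T₁∘f))`. -/
theorem population_change_of_variables (f T0 T1 y0 y1 : ℂ[X]) (hf : 0 < f.natDegree)
    (hT0 : T0 ≠ 0) (hT1 : T1 ≠ 0) (hy0 : y0 ≠ 0) (hy1 : y1 ≠ 0) :
    (∀ ty0 : ℂ[X], pWr y0 ty0 = T0 * y1 ^ 2 →
      pWr (y0.comp f) (ty0.comp f) =
        (derivative f * T0.comp f) * (y1.comp f) ^ 2) ∧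
    (Fertile (T0, T1) (y0, y1) →
      Fertile (derivative f * T0.comp f, derivative f * T1.comp f)
        (y0.comp f, y1.comp f)) ∧
    (∀ u0 u1 : ℂ[X], Relation.ReflTransGen (Reprod (T0, T1)) (y0, y1) (u0, u1) →
      Relation.ReflTransGen (Reprod (derivative f * T0.comp f, derivative f * T1.comp f))
        (y0.comp f, y1.comp f) (u0.comp f, u1.comp f)) := by
  have key : ∀ (T y w ty : ℂ[X]), pWr y ty = T * w ^ 2 →
      pWr (y.comp f) (ty.comp f) = (derivative f * T.comp f) * (w.comp f) ^ 2 := by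
    intro T y w ty h
    rw [pWr_comp, h]
    simp only [Polynomial.mul_comp, Polynomial.pow_comp]
    ring
  refine ⟨fun ty0 h => by simpa using key T0 y0 y1 ty0 (by simpa using h), ?_, ?_⟩
  · rintro ⟨h1, h2, ty0, ty1, e0, e1⟩
    exact ⟨comp_ne_zero' _ _ h1 hf, comp_ne_zero' _ _ h2 hf,
      ty0.comp f, ty1.comp f, key T0 y0 y1 ty0 e0, key T1 y1 y0 ty1 e1⟩
  · have main : ∀ z w : ℂ[X] × ℂ[X], Relation.ReflTransGen (Reprod (T0, T1)) z w →
        Relation.ReflTransGen (Reprod (derivative f * T0.comp f, derivative f * T1.comp f))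
          (z.1.comp f, z.2.comp f) (w.1.comp f, w.2.comp f) := by
      intro z w h
      induction h with
      | refl => exact Relation.ReflTransGen.refl
      | tail hbc hstep ih =>
        refine ih.tail ?_
        rcases hstep with ⟨h1, h2⟩ | ⟨h1, h2⟩
        · exact Or.inl ⟨by rw [h1], key T0 _ _ _ h2⟩
        · exact Or.inr ⟨by rw [h1], key T1 _ _ _ h2⟩
    intro u0 u1 h
    exact main (y0, y1) (u0, u1) h
end
end

section
/- Fix pairwise distinct complex numbers z₁,…,z_k and natural numbers a₁,…,a_k, b₁,…,b_k, and set T₀ = ∏_{r=1}^{k}(x−z_r)^{a_r} and T₁ = ∏_{r=1}^{k}(x−z_r)^{b_r}. Let s₁,…,s_{d₀} be pairwise distinct and t₁,…,t_{d₁} be pairwise distinct complex numbers with s_i ≠ t_j for all i,j, s_i ≠ z_r whenever a_r > 0, and t_j ≠ z_r whenever b_r > 0; set y₀ = ∏_{i=1}^{d₀}(x−s_i) and y₁ = ∏_{j=1}^{d₁}(x−t_j). If there exist polynomials ỹ₀ and ỹ₁ with Wr(y₀,ỹ₀) = T₀·y₁² and Wr(y₁,ỹ₁) = T₁·y₀²,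 then the Bethe ansatz equations hold: for each i = 1,…,d₀, ∑_{i′ ≠ i} 2/(s_i − s_{i′}) − ∑_{j=1}^{d₁} 2/(s_i − t_j) − ∑_{r=1}^{k} a_r/(s_i − z_r) = 0, and for each j = 1,…,d₁, ∑_{j′ ≠ j} 2/(t_j − t_{j′}) − ∑_{i=1}^{d₀} 2/(t_j − s_i) − ∑_{r=1}^{k} b_r/(t_j − z_r) = 0. -/
open Polynomial

noncomputable section

private lemma eval_derivative_prod' {ι : Type*} [DecidableEq ι] (F : Finset ι) (f : ι → ℂ[X])
    (x : ℂ) (h : ∀ j ∈ F, eval x (f j) ≠ 0) :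
    eval x (derivative (∏ j ∈ F, f j)) =
      eval x (∏ j ∈ F, f j) * ∑ j ∈ F, eval x (derivative (f j)) / eval x (f j) := by
  induction F using Finset.induction_on with
  | empty => simp
  | @insert a F ha ih =>
    rw [Finset.prod_insert ha, Finset.sum_insert ha, derivative_mul, eval_add, eval_mul, eval_mul,
      ih (fun j hj => h j (Finset.mem_insert_of_mem hj))]
    have hea := h a (Finset.mem_insert_self a F)
    field_simp
    simp only [eval_mul]; ring

private lemma ratio_pow (x u : ℂ) (n : ℕ) (h : 0 < n → x ≠ u) :
    eval x (derivative ((X - C u) ^ n)) / eval x ((X - C u) ^ n) = n / (x - u) := by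
  rcases Nat.eq_zero_or_pos n with h0 | hn
  · subst h0; simp
  · have hxu : x - u ≠ 0 := sub_ne_zero.2 (h hn)
    rw [derivative_X_sub_C_pow]
    simp only [eval_mul, eval_pow, eval_natCast, eval_sub, eval_X, eval_C]
    rw [div_eq_div_iff (pow_ne_zero _ hxu) hxu]
    rw [mul_assoc, ← pow_succ, Nat.sub_add_cancel hn]

private lemma key {k d0 d1 : ℕ} (z : Fin k → ℂ) (a : Fin k → ℕ)
    (s : Fin d0 → ℂ) (hs : Function.Injective s)
    (t : Fin d1 → ℂ)
    (hst : ∀ i j, s i ≠ t j)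
    (hsz : ∀ i r, 0 < a r → s i ≠ z r)
    (w : ℂ[X])
    (h : (∏ i, (X - C (s i))) * derivative w - derivative (∏ i, (X - C (s i))) * w
        = (∏ r, (X - C (z r)) ^ a r) * (∏ j, (X - C (t j))) ^ 2)
    (i : Fin d0) :
    (∑ i2 ∈ Finset.univ.erase i, 2 / (s i - s i2)) - (∑ j, 2 / (s i - t j))
        - (∑ r, (a r : ℂ) / (s i - z r)) = 0 := by
  classical
  set c : ℂ := s i with hc
  set q : ℂ[X] := ∏ i2 ∈ Finset.univ.erase i, (X - C (s i2)) with hqdef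
  set T : ℂ[X] := ∏ r, (X - C (z r)) ^ a r with hTdef
  set y1 : ℂ[X] := ∏ j, (X - C (t j)) with hy1def
  have hfac : (∏ i2, (X - C (s i2))) = (X - C c) * q :=
    (Finset.mul_prod_erase Finset.univ (fun i2 => X - C (s i2)) (Finset.mem_univ i)).symm
  -- nonvanishing
  have hqc : eval c q ≠ 0 := by
    rw [hqdef, eval_prod]
    refine Finset.prod_ne_zero_iff.2 fun j hj => ?_
    simp only [eval_sub, eval_X, eval_C]
    exact sub_ne_zero.2 fun e => (Finset.ne_of_mem_erase hj) (hs e.symm)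
  have hyc : eval c y1 ≠ 0 := by
    rw [hy1def, eval_prod]
    refine Finset.prod_ne_zero_iff.2 fun j _ => ?_
    simp only [eval_sub, eval_X, eval_C]
    exact sub_ne_zero.2 (hst i j)
  have hTc : eval c T ≠ 0 := by
    rw [hTdef, eval_prod]
    refine Finset.prod_ne_zero_iff.2 fun r _ => ?_
    simp only [eval_pow, eval_sub, eval_X, eval_C]
    rcases Nat.eq_zero_or_pos (a r) with h0 | hr
    · rw [h0]; simp
    · exact pow_ne_zero _ (sub_ne_zero.2 (hsz i r hr))
  -- logarithmic derivatives
  set Sq : ℂ := ∑ i2 ∈ Finset.univ.erase i, 1 / (c - s i2) with hSq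
  set Sy : ℂ := ∑ j, 1 / (c - t j) with hSy
  set ST : ℂ := ∑ r, (a r : ℂ) / (c - z r) with hST
  have hq' : eval c (derivative q) = eval c q * Sq := by
    rw [hqdef, eval_derivative_prod']
    · rw [hSq]; congr 1
      refine Finset.sum_congr rfl fun j hj => ?_
      simp
    · intro j hj
      simp only [eval_sub, eval_X, eval_C]
      exact sub_ne_zero.2 fun e => (Finset.ne_of_mem_erase hj) (hs e.symm)
  have hy' : eval c (derivative y1) = eval c y1 * Sy := by
    rw [hy1def, eval_derivative_prod']
    · rw [hSy]; congr 1
      refine Finset.sum_congr rfl fun j _ => ?_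
      simp
    · intro j _
      simp only [eval_sub, eval_X, eval_C]
      exact sub_ne_zero.2 (hst i j)
  have hT' : eval c (derivative T) = eval c T * ST := by
    rw [hTdef, eval_derivative_prod']
    · rw [hST]; congr 1
      exact Finset.sum_congr rfl fun r _ => ratio_pow c (z r) (a r) (hsz i r)
    · intro r _
      simp only [eval_pow, eval_sub, eval_X, eval_C]
      rcases Nat.eq_zero_or_pos (a r) with h0 | hr
      · rw [h0]; simp
      · exact pow_ne_zero _ (sub_ne_zero.2 (hsz i r hr))
  -- evaluate the Wronskian identity at c
  have e1 : eval c q * eval c w = -(eval c T * (eval c y1) ^ 2) := by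
    have := congrArg (eval c) h
    rw [hfac] at this
    simp only [eval_sub, eval_mul, eval_add, eval_pow, eval_X, eval_C, derivative_mul,
      derivative_X_sub_C, one_mul, eval_one, sub_self, zero_mul] at this
    linear_combination -this
  -- evaluate the derivative of the Wronskian identity at c
  have e2 : -(2 * (eval c q * Sq) * eval c w)
      = eval c T * ST * (eval c y1) ^ 2 + 2 * eval c T * (eval c y1) ^ 2 * Sy := by
    have hd := congrArg (fun p => eval c (derivative p)) h
    rw [hfac] at hd
    simp only [derivative_sub, derivative_add, derivative_mul, derivative_X_sub_C,
      derivative_X, derivative_C, derivative_one, derivative_pow, sub_zero, one_mul, mul_one,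
      eval_sub, eval_add, eval_mul, eval_pow, eval_X, eval_C, eval_one,
      eval_natCast, Nat.cast_ofNat, sub_self, zero_mul, mul_zero, add_zero, zero_add] at hd
    norm_num at hd
    rw [hq', hy', hT'] at hd
    linear_combination hd
  have hTy : eval c T * (eval c y1) ^ 2 ≠ 0 := mul_ne_zero hTc (pow_ne_zero _ hyc)
  have hmain : 2 * Sq * (eval c T * (eval c y1) ^ 2)
      = (ST + 2 * Sy) * (eval c T * (eval c y1) ^ 2) := by
    linear_combination 2 * Sq * e1 + e2
  have hfin : 2 * Sq = ST + 2 * Sy := mul_right_cancel₀ hTy hmain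
  have hs2 : ∑ i2 ∈ Finset.univ.erase i, (2 : ℂ) / (c - s i2) = 2 * Sq := by
    rw [hSq, Finset.mul_sum]
    exact Finset.sum_congr rfl fun _ _ => (mul_one_div 2 _).symm
  have ht2 : ∑ j, (2 : ℂ) / (c - t j) = 2 * Sy := by
    rw [hSy, Finset.mul_sum]
    exact Finset.sum_congr rfl fun _ _ => (mul_one_div 2 _).symm
  rw [hs2, ht2]
  linear_combination hfin

/-- If the generic pair `(y₀,y₁)` admits Wronskian witnesses (is fertile), then the Bethe
ansatz equations hold at the roots `s_i` and `t_j`. -/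
theorem fertile_implies_bethe (k d0 d1 : ℕ) (z : Fin k → ℂ) (hz : Function.Injective z)
    (a b : Fin k → ℕ)
    (s : Fin d0 → ℂ) (hs : Function.Injective s)
    (t : Fin d1 → ℂ) (ht : Function.Injective t)
    (hst : ∀ i j, s i ≠ t j)
    (hsz : ∀ i r, 0 < a r → s i ≠ z r)
    (htz : ∀ j r, 0 < b r → t j ≠ z r)
    (T0 T1 y0 y1 : ℂ[X])
    (hT0 : T0 = ∏ r, (X - C (z r)) ^ a r)
    (hT1 : T1 = ∏ r, (X - C (z r)) ^ b r)
    (hy0 : y0 = ∏ i, (X - C (s i)))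
    (hy1 : y1 = ∏ j, (X - C (t j)))
    (hfert : ∃ ty0 ty1 : ℂ[X], pWr y0 ty0 = T0 * y1 ^ 2 ∧ pWr y1 ty1 = T1 * y0 ^ 2) :
    (∀ i, (∑ i2 ∈ Finset.univ.erase i, 2 / (s i - s i2)) - (∑ j, 2 / (s i - t j))
        - (∑ r, (a r : ℂ) / (s i - z r)) = 0) ∧
      (∀ j, (∑ j2 ∈ Finset.univ.erase j, 2 / (t j - t j2)) - (∑ i, 2 / (t j - s i))
        - (∑ r, (b r : ℂ) / (t j - z r)) = 0) := by
  obtain ⟨ty0, ty1, h0, h1⟩ := hfert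
  rw [pWr] at h0 h1
  subst hT0 hT1 hy0 hy1
  constructor
  · exact fun i => key z a s hs t hst hsz ty0 h0 i
  · exact fun j => key z b t ht s (fun j i => (hst i j).symm) htz ty1 h1 j
end
end

section
/- Fix pairwise distinct complex numbers z₁,…,z_k and natural numbers a₁,…,a_k, b₁,…,b_k, and set T₀ = ∏_{r=1}^{k}(x−z_r)^{a_r} and T₁ = ∏_{r=1}^{k}(x−z_r)^{b_r}. Let s₁,…,s_{d₀} be pairwise distinct and t₁,…,t_{d₁} be pairwise distinct complex numbers with s_i ≠ t_j for all i,j, s_i ≠ z_r whenever a_r > 0, and t_j ≠ z_r whenever b_r > 0; set y₀ = ∏_{i=1}^{d₀}(x−s_i) and y₁ = ∏_{j=1}^{d₁}(x−t_j). If the Bethe ansatz equations hold — that is, for each i = 1,…,d₀, ∑_{i′ ≠ i} 2/(s_i − s_{i′}) − ∑_{j=1}^{d₁} 2/(s_i − t_j) − ∑_{r=1}^{k} a_r/(s_i − z_r) = 0, and for each j = 1,…,d₁, ∑_{j′ ≠ j} 2/(t_j − t_{j′}) − ∑_{i=1}^{d₀} 2/(t_j − s_i) − ∑_{r=1}^{k}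 b_r/(t_j − z_r) = 0 — then there exist polynomials ỹ₀ and ỹ₁ with Wr(y₀,ỹ₀) = T₀·y₁² and Wr(y₁,ỹ₁) = T₁·y₀². -/
open Polynomial

noncomputable section

section Helpers
open Finset

lemma pderiv_prod {ι : Type*} [DecidableEq ι] (s : Finset ι) (f : ι → ℂ[X]) :
    derivative (∏ i ∈ s, f i) = ∑ i ∈ s, (∏ j ∈ s.erase i, f j) * derivative (f i) := by
  induction s using Finset.induction with
  | empty => simp
  | @insert a s ha ih =>
    rw [Finset.prod_insert ha, derivative_mul, ih, Finset.sum_insert ha,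
      Finset.erase_insert ha, Finset.mul_sum]
    congr 1
    · exact mul_comm _ _
    · refine Finset.sum_congr rfl fun i hi => ?_
      have hia : i ≠ a := fun h => ha (h ▸ hi)
      rw [Finset.erase_insert_of_ne hia.symm,
        Finset.prod_insert (fun h => ha (Finset.erase_subset _ _ h)), mul_assoc]

lemma exists_antideriv (p : ℂ[X]) : ∃ q : ℂ[X], derivative q = p := by
  refine ⟨p.sum fun n c => C (c / (n + 1)) * X ^ (n + 1), ?_⟩
  conv_rhs => rw [p.as_sum_support_C_mul_X_pow]
  rw [Polynomial.sum, map_sum]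
  refine Finset.sum_congr rfl fun n _ => ?_
  rw [derivative_C_mul_X_pow, Nat.add_sub_cancel]
  congr 1
  have hne : ((n : ℂ) + 1) ≠ 0 := Nat.cast_add_one_ne_zero n
  push_cast
  rw [div_mul_cancel₀ _ hne]

lemma sq_dvd_of_double_root (p : ℂ[X]) (c : ℂ) (h0 : p.eval c = 0)
    (h1 : (derivative p).eval c = 0) : (X - C c) ^ 2 ∣ p := by
  obtain ⟨q, rfl⟩ := dvd_iff_isRoot.2 h0
  rw [derivative_mul, derivative_X_sub_C, one_mul, eval_add, eval_mul, eval_sub, eval_X,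
    eval_C, sub_self, zero_mul, add_zero] at h1
  obtain ⟨r, rfl⟩ := dvd_iff_isRoot.2 h1
  exact ⟨r, by ring⟩

/-- Logarithmic derivative evaluation of a product of powers. -/
lemma eval_deriv_prodpow {n : ℕ} (c : Fin n → ℂ) (e : Fin n → ℕ) (x : ℂ)
    (hx : ∀ r, 0 < e r → x ≠ c r) :
    eval x (derivative (∏ r, (X - C (c r)) ^ e r)) =
      eval x (∏ r, (X - C (c r)) ^ e r) * ∑ r, (e r : ℂ) / (x - c r) := by
  rw [pderiv_prod, eval_finset_sum, Finset.mul_sum]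
  refine Finset.sum_congr rfl fun r _ => ?_
  rw [eval_mul, eval_prod]
  rcases Nat.eq_zero_or_pos (e r) with h | h
  · simp [h, Polynomial.derivative_pow]
  · have hxc : x - c r ≠ 0 := sub_ne_zero.2 (hx r h)
    obtain ⟨m, hm⟩ := Nat.exists_eq_succ_of_ne_zero h.ne'
    rw [derivative_pow, derivative_X_sub_C, mul_one, eval_mul, eval_pow, eval_sub, eval_X,
      eval_C, eval_C]
    rw [eval_prod, ← Finset.mul_prod_erase univ (fun j => eval x ((X - C (c j)) ^ e j))
      (mem_univ r)]
    simp only [eval_pow, eval_sub, eval_X, eval_C]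
    rw [hm]
    field_simp
    simp only [Nat.succ_sub_one, pow_succ]
    ring

/-- Evaluation of the derivative of `∏ (X - c j)` at a root. -/
lemma eval_deriv_prod_at {n : ℕ} (c : Fin n → ℂ) (hc : Function.Injective c) (i : Fin n) :
    eval (c i) (derivative (∏ j, (X - C (c j)))) = ∏ j ∈ univ.erase i, (c i - c j) := by
  rw [pderiv_prod, eval_finset_sum]
  rw [Finset.sum_eq_single_of_mem i (mem_univ i)]
  · simp [eval_prod]
  · intro m _ hmi
    rw [eval_mul, eval_prod]
    rw [Finset.prod_eq_zero (Finset.mem_erase.2 ⟨hmi.symm, mem_univ i⟩)]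
    · ring
    · simp

lemma eval_deriv_prod_at_ne_zero {n : ℕ} (c : Fin n → ℂ) (hc : Function.Injective c)
    (i : Fin n) : eval (c i) (derivative (∏ j, (X - C (c j)))) ≠ 0 := by
  rw [eval_deriv_prod_at c hc i]
  exact Finset.prod_ne_zero_iff.2 fun j hj =>
    sub_ne_zero.2 fun h => (Finset.mem_erase.1 hj).1 (hc h.symm)

/-- Evaluation of the second derivative of `∏ (X - c j)` at a root. -/
lemma eval_deriv2_prod_at {n : ℕ} (c : Fin n → ℂ) (hc : Function.Injective c) (i : Fin n) :
    eval (c i) (derivative (derivative (∏ j, (X - C (c j))))) =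
      eval (c i) (derivative (∏ j, (X - C (c j)))) *
        (2 * ∑ j ∈ univ.erase i, 1 / (c i - c j)) := by
  have hA : ∀ m j : Fin n,
      eval (c i) ((∏ k ∈ (univ.erase m).erase j, (X - C (c k))) : ℂ[X])
        = ∏ k ∈ (univ.erase m).erase j, (c i - c k) := by
    intro m j; rw [eval_prod]; simp
  rw [eval_deriv_prod_at c hc i]
  rw [pderiv_prod]
  simp only [derivative_X_sub_C, mul_one]
  rw [map_sum, eval_finset_sum]
  have key : ∀ m : Fin n,
      eval (c i) (derivative (∏ j ∈ univ.erase m, (X - C (c j)))) =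
        if m = i then ∑ j ∈ univ.erase i, ∏ k ∈ (univ.erase i).erase j, (c i - c k)
        else ∏ k ∈ (univ.erase i).erase m, (c i - c k) := by
    intro m
    rw [pderiv_prod]
    simp only [derivative_X_sub_C, mul_one]
    rw [eval_finset_sum]
    by_cases hmi : m = i
    · subst hmi
      rw [if_pos rfl]
      exact Finset.sum_congr rfl fun j _ => hA _ j
    · rw [if_neg hmi]
      have hi : i ∈ univ.erase m := Finset.mem_erase.2 ⟨fun h => hmi h.symm, mem_univ i⟩
      rw [Finset.sum_eq_single_of_mem i hi]
      · rw [hA m i, Finset.erase_right_comm]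
      · intro j hj hji
        rw [hA m j]
        refine Finset.prod_eq_zero (Finset.mem_erase.2 ⟨fun h => hji h.symm,
          Finset.mem_erase.2 ⟨fun h => hmi h.symm, mem_univ i⟩⟩) (sub_self (c i))
  calc ∑ m, eval (c i) (derivative (∏ j ∈ univ.erase m, (X - C (c j))))
      = ∑ m, (if m = i then ∑ j ∈ univ.erase i, ∏ k ∈ (univ.erase i).erase j, (c i - c k)
        else ∏ k ∈ (univ.erase i).erase m, (c i - c k)) := Finset.sum_congr rfl fun m _ => key m
    _ = (∑ j ∈ univ.erase i, ∏ k ∈ (univ.erase i).erase j, (c i - c k))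
        + ∑ m ∈ univ.erase i, ∏ k ∈ (univ.erase i).erase m, (c i - c k) := by
        rw [← Finset.add_sum_erase univ _ (mem_univ i), if_pos rfl]
        congr 1
        refine Finset.sum_congr rfl fun m hm => ?_
        rw [if_neg (Finset.mem_erase.1 hm).1]
    _ = 2 * ∑ m ∈ univ.erase i, ∏ k ∈ (univ.erase i).erase m, (c i - c k) := by ring
    _ = (∏ j ∈ univ.erase i, (c i - c j)) *
        (2 * ∑ j ∈ univ.erase i, 1 / (c i - c j)) := by
        rw [Finset.mul_sum, Finset.mul_sum, Finset.mul_sum]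
        refine Finset.sum_congr rfl fun m hm => ?_
        have hne : c i - c m ≠ 0 :=
          sub_ne_zero.2 fun h => (Finset.mem_erase.1 hm).1 (hc h.symm)
        rw [← Finset.mul_prod_erase (univ.erase i) (fun k => c i - c k) hm]
        field_simp
lemma exists_wr {n : ℕ} (c : Fin n → ℂ) (hc : Function.Injective c) (F : ℂ[X])
    (h : ∀ i, (derivative F).eval (c i) * (derivative (∏ j, (X - C (c j)))).eval (c i)
        = F.eval (c i) * (derivative (derivative (∏ j, (X - C (c j))))).eval (c i)) :
    ∃ w : ℂ[X], pWr (∏ j, (X - C (c j))) w = F := by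
  set y : ℂ[X] := ∏ j, (X - C (c j)) with hy
  have hy0 : ∀ i, y.eval (c i) = 0 := fun i => by
    rw [hy, eval_prod]
    exact Finset.prod_eq_zero (mem_univ i) (by simp)
  have hyd : ∀ i, (derivative y).eval (c i) ≠ 0 := fun i =>
    eval_deriv_prod_at_ne_zero c hc i
  set r : ℂ[X] := Lagrange.interpolate univ c
    (fun i => -(F.eval (c i)) / ((derivative y).eval (c i))) with hr
  have hre : ∀ i, r.eval (c i) = -(F.eval (c i)) / ((derivative y).eval (c i)) := fun i =>
    Lagrange.eval_interpolate_at_node _ (hc.injOn) (mem_univ i)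
  set G : ℂ[X] := F - (y * derivative r - derivative y * r) with hG
  have hG0 : ∀ i, G.eval (c i) = 0 := by
    intro i
    have := hyd i
    simp only [hG, eval_sub, eval_mul, hy0 i, hre i, zero_mul, zero_sub]
    field_simp
    simp
  have hG1 : ∀ i, (derivative G).eval (c i) = 0 := by
    intro i
    have hne := hyd i
    simp only [hG, derivative_sub, derivative_mul, eval_sub, eval_add, eval_mul, hy0 i,
      zero_mul, hre i]
    field_simp
    linear_combination (h i)
  have hdvd : y ^ 2 ∣ G := by
    have : y ^ 2 = ∏ j, (X - C (c j)) ^ 2 := by rw [hy, ← Finset.prod_pow]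
    rw [this]
    refine Finset.prod_dvd_of_coprime ?_ fun i _ => sq_dvd_of_double_root G (c i) (hG0 i) (hG1 i)
    intro i _ j _ hij
    exact (Polynomial.isCoprime_X_sub_C_of_isUnit_sub
      (sub_ne_zero.2 fun h' => hij (hc h')).isUnit).pow
  obtain ⟨h2, hh2⟩ := hdvd
  obtain ⟨q, hq⟩ := exists_antideriv h2
  refine ⟨q * y + r, ?_⟩
  have expand : pWr y (q * y + r) = derivative q * y ^ 2 + (y * derivative r - derivative y * r) := by
    simp only [pWr, derivative_add, derivative_mul]
    ring
  rw [expand, hq]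
  have : y * derivative r - derivative y * r = F - G := by rw [hG]; ring
  rw [this, hh2]
  ring
/-- The key Bethe-equation computation, stated once and used symmetrically. -/
lemma bethe_key {k d0 d1 : ℕ} (z : Fin k → ℂ) (a : Fin k → ℕ)
    (s : Fin d0 → ℂ) (hs : Function.Injective s) (t : Fin d1 → ℂ)
    (hst : ∀ i j, s i ≠ t j)
    (hsz : ∀ i r, 0 < a r → s i ≠ z r)
    (hb0 : ∀ i, (∑ i2 ∈ Finset.univ.erase i, 2 / (s i - s i2)) - (∑ j, 2 / (s i - t j))
        - (∑ r, (a r : ℂ) / (s i - z r)) = 0) :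
    ∀ i, (derivative ((∏ r, (X - C (z r)) ^ a r) * (∏ j, (X - C (t j))) ^ 2)).eval (s i)
        * (derivative (∏ j, (X - C (s j)))).eval (s i)
      = ((∏ r, (X - C (z r)) ^ a r) * (∏ j, (X - C (t j))) ^ 2).eval (s i)
        * (derivative (derivative (∏ j, (X - C (s j))))).eval (s i) := by
  intro i
  have hb := hb0 i
  have h2 : ∀ d : ℂ, 2 / d = 2 * (1 / d) := fun d => by rw [mul_one_div]
  simp only [h2, ← Finset.mul_sum] at hb
  have hT0d := eval_deriv_prodpow z a (s i) (fun r hr => hsz i r hr)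
  have hy1eq : (∏ j, (X - C (t j)) : ℂ[X]) = ∏ j, (X - C (t j)) ^ 1 := by simp
  have hy1d := eval_deriv_prodpow t (fun _ => 1) (s i) (fun j _ => hst i j)
  rw [← hy1eq] at hy1d
  simp only [Nat.cast_one] at hy1d
  have hy0dd := eval_deriv2_prod_at s hs i
  rw [derivative_mul, derivative_pow]
  simp only [eval_add, eval_mul, eval_pow, eval_C]
  rw [hT0d, hy1d, hy0dd]
  push_cast
  linear_combination (-(eval (s i) (∏ r, (X - C (z r)) ^ a r)
    * (eval (s i) (∏ j, (X - C (t j))))^2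
    * eval (s i) (derivative (∏ j, (X - C (s j)))))) * hb

end Helpers

/-- If the Bethe ansatz equations hold at the roots `s_i` and `t_j`, then there exist
Wronskian witnesses `ỹ₀, ỹ₁` (the pair `(y₀,y₁)` is fertile). -/
theorem bethe_implies_fertile (k d0 d1 : ℕ) (z : Fin k → ℂ) (hz : Function.Injective z)
    (a b : Fin k → ℕ)
    (s : Fin d0 → ℂ) (hs : Function.Injective s)
    (t : Fin d1 → ℂ) (ht : Function.Injective t)
    (hst : ∀ i j, s i ≠ t j)
    (hsz : ∀ i r, 0 < a r → s i ≠ z r)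
    (htz : ∀ j r, 0 < b r → t j ≠ z r)
    (T0 T1 y0 y1 : ℂ[X])
    (hT0 : T0 = ∏ r, (X - C (z r)) ^ a r)
    (hT1 : T1 = ∏ r, (X - C (z r)) ^ b r)
    (hy0 : y0 = ∏ i, (X - C (s i)))
    (hy1 : y1 = ∏ j, (X - C (t j)))
    (hbae : (∀ i, (∑ i2 ∈ Finset.univ.erase i, 2 / (s i - s i2)) - (∑ j, 2 / (s i - t j))
        - (∑ r, (a r : ℂ) / (s i - z r)) = 0) ∧
      (∀ j, (∑ j2 ∈ Finset.univ.erase j, 2 / (t j - t j2)) - (∑ i, 2 / (t j - s i))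
        - (∑ r, (b r : ℂ) / (t j - z r)) = 0)) :
    ∃ ty0 ty1 : ℂ[X], pWr y0 ty0 = T0 * y1 ^ 2 ∧ pWr y1 ty1 = T1 * y0 ^ 2 := by
  obtain ⟨hb0, hb1⟩ := hbae
  obtain ⟨w0, hw0⟩ := exists_wr s hs ((∏ r, (X - C (z r)) ^ a r) * (∏ j, (X - C (t j))) ^ 2)
    (bethe_key z a s hs t hst hsz hb0)
  obtain ⟨w1, hw1⟩ := exists_wr t ht ((∏ r, (X - C (z r)) ^ b r) * (∏ i, (X - C (s i))) ^ 2)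
    (bethe_key z b t ht s (fun j i => (hst i j).symm) htz hb1)
  exact ⟨w0, w1, by rw [hy0, hT0, hy1]; exact hw0, by rw [hy1, hT1, hy0]; exact hw1⟩
end
end
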